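/- arXiv:1704.00604 — 3 statements merged into one kernel-verified Lean document; each statement's English description precedes it below -/
import Mathlib

section
/- For every a > 0 and every (u,v) ∈ ℝ²: p H(x,u,v) = u H_u(x,u,v) + v H_v(x,u,v) for all x ∈ Λ, and 2 H(x,u,v) ≤ u H_u(x,u,v) + v H_v(x,u,v) for all x ∈ ℝ^N ∖ Λ. -/
open MeasureTheory Real Set Filter

noncomputable section

abbrev Euc (N : ℕ) := EuclideanSpace ℝ (Fin N)

/-- Partial derivative of a two-variable real function in the first variable. -/
def pdU (f : ℝ → ℝ → ℝ) (u v : ℝ) : ℝ := deriv (fun t => f t v) u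

/-- Partial derivative of a two-variable real function in the second variable. -/
def pdV (f : ℝ → ℝ → ℝ) (u v : ℝ) : ℝ := deriv (fun t => f u t) v

/-- Integrand of the Gagliardo seminorm. -/
def gagKer (N : ℕ) (s : ℝ) (u : Euc N → ℝ) (z : Euc N × Euc N) : ℝ :=
  (u z.1 - u z.2) ^ 2 / ‖z.1 - z.2‖ ^ ((N : ℝ) + 2 * s)

/-- Squared Gagliardo seminorm `[u]²`. -/
def gagSq (N : ℕ) (s : ℝ) (u : Euc N → ℝ) : ℝ := ∫ z, gagKer N s u z

/-- Membership in the fractional Sobolev space `H^s(ℝ^N)`. -/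
def MemHs (N : ℕ) (s : ℝ) (u : Euc N → ℝ) : Prop :=
  MemLp u 2 (volume : Measure (Euc N)) ∧ Integrable (gagKer N s u)

/-- The nonlinearity `Q` together with assumptions (Q1)-(Q6); `Q` is `C²` on the closed
first quadrant and extended by `0` outside of it.  Its partial derivatives are `pdU Q`,
`pdV Q`. -/
structure QSetup (p : ℝ) : Type where
  Q : ℝ → ℝ → ℝ
  smooth : ContDiffOn ℝ 2 (fun z : ℝ × ℝ => Q z.1 z.2) (Ici 0 ×ˢ Ici 0)
  ext_zero : ∀ u v : ℝ, u ≤ 0 ∨ v ≤ 0 → Q u v = 0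
  q1 : ∀ t : ℝ, 0 < t → ∀ u v : ℝ, 0 ≤ u → 0 ≤ v → Q (t * u) (t * v) = t ^ p * Q u v
  q2 : ∃ C : ℝ, 0 < C ∧ ∀ u v : ℝ, 0 ≤ u → 0 ≤ v →
        |pdU Q u v| + |pdV Q u v| ≤ C * (u ^ (p - 1) + v ^ (p - 1))
  q3 : pdU Q 0 1 = 0 ∧ pdV Q 1 0 = 0
  q4 : pdU Q 1 0 = 0 ∧ pdV Q 0 1 = 0
  q5 : ∀ u v : ℝ, 0 < u → 0 < v → 0 < Q u v
  q6 : ∀ u v : ℝ, 0 ≤ u → 0 ≤ v → 0 ≤ pdU Q u v ∧ 0 ≤ pdV Q u v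

/-- The potentials `V`, `W`, the set `Λ`, the point `x₀` and `ρ₀`, with (H1)-(H3). -/
structure PotSetup (N : ℕ) : Type where
  V : Euc N → ℝ
  W : Euc N → ℝ
  Λ : Set (Euc N)
  x₀ : Euc N
  ρ₀ : ℝ
  contV : Continuous V
  contW : Continuous W
  openΛ : IsOpen Λ
  bddΛ : Bornology.IsBounded Λ
  x₀mem : x₀ ∈ Λ
  ρ₀pos : 0 < ρ₀
  h1 : ∀ x ∈ frontier Λ, ρ₀ ≤ V x ∧ ρ₀ ≤ W x
  h2 : V x₀ < ρ₀ ∧ W x₀ < ρ₀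
  h3 : (∀ x, V x₀ ≤ V x) ∧ (∀ x, W x₀ ≤ W x) ∧ 0 < V x₀ ∧ 0 < W x₀

/-- `‖(u,v)‖²_ξ` for the autonomous problem with frozen potentials `V(ξ)`, `W(ξ)`. -/
def normSqXi {N : ℕ} (s : ℝ) (P : PotSetup N) (ξ : Euc N) (u v : Euc N → ℝ) : ℝ :=
  gagSq N s u + gagSq N s v + ∫ x, (P.V ξ * u x ^ 2 + P.W ξ * v x ^ 2)

/-- The autonomous energy functional `J_ξ`. -/
def Jxi {N : ℕ} (s : ℝ) {p : ℝ} (QS : QSetup p) (P : PotSetup N) (ξ : Euc N)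
    (u v : Euc N → ℝ) : ℝ :=
  (1 / 2) * normSqXi s P ξ u v - ∫ x, QS.Q (u x) (v x)

/-- The Nehari manifold `N_ξ` of the autonomous functional `J_ξ`. -/
def NehariXi {N : ℕ} (s : ℝ) {p : ℝ} (QS : QSetup p) (P : PotSetup N) (ξ : Euc N) :
    Set ((Euc N → ℝ) × (Euc N → ℝ)) :=
  {w | MemHs N s w.1 ∧ MemHs N s w.2 ∧ w ≠ (0, 0) ∧
    normSqXi s P ξ w.1 w.2 =
      ∫ x, (w.1 x * pdU QS.Q (w.1 x) (w.2 x) + w.2 x * pdV QS.Q (w.1 x) (w.2 x))}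

/-- `C(ξ) = inf_{(u,v) ∈ N_ξ} J_ξ(u,v)`. -/
def Cmin {N : ℕ} (s : ℝ) {p : ℝ} (QS : QSetup p) (P : PotSetup N) (ξ : Euc N) : ℝ :=
  sInf ((fun w : (Euc N → ℝ) × (Euc N → ℝ) => Jxi s QS P ξ w.1 w.2) '' NehariXi s QS P ξ)

/-- The cut-off function `η` used in the penalization, for a given `a > 0`. -/
structure EtaSetup (a cη : ℝ) : Type where
  η : ℝ → ℝ
  smooth : ContDiff ℝ 2 η
  anti : Antitone η
  mem01 : ∀ t, η t ∈ Icc (0 : ℝ) 1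
  eq_one : ∀ t, t ≤ a → η t = 1
  eq_zero : ∀ t, 5 * a ≤ t → η t = 0
  bd1 : ∀ t, |deriv η t| ≤ cη / a
  bd2 : ∀ t, |deriv (deriv η) t| ≤ cη / a ^ 2

/-- `A = max { Q(u,v)/(u²+v²) : a ≤ √(u²+v²) ≤ 5a }`. -/
def Aconst {p : ℝ} (QS : QSetup p) (a : ℝ) : ℝ :=
  sSup ((fun z : ℝ × ℝ => QS.Q z.1 z.2 / (z.1 ^ 2 + z.2 ^ 2)) ''
    {z : ℝ × ℝ | a ≤ Real.sqrt (z.1 ^ 2 + z.2 ^ 2) ∧ Real.sqrt (z.1 ^ 2 + z.2 ^ 2) ≤ 5 * a})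

/-- The penalized nonlinearity `Q̂`. -/
def Qhat {p : ℝ} (QS : QSetup p) (η : ℝ → ℝ) (A u v : ℝ) : ℝ :=
  η (Real.sqrt (u ^ 2 + v ^ 2)) * QS.Q u v +
    (1 - η (Real.sqrt (u ^ 2 + v ^ 2))) * (A * (u ^ 2 + v ^ 2))

/-- The penalized function `H(x,u,v) = χ_Λ(x) Q(u,v) + (1-χ_Λ(x)) Q̂(u,v)`. -/
def Hpen {N : ℕ} {p : ℝ} (QS : QSetup p) (η : ℝ → ℝ) (A : ℝ) (Λ : Set (Euc N))
    (x : Euc N) (u v : ℝ) : ℝ :=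
  Λ.indicator (fun _ => (1 : ℝ)) x * QS.Q u v +
    (1 - Λ.indicator (fun _ => (1 : ℝ)) x) * Qhat QS η A u v

/-- `H_u`. -/
def HpenU {N : ℕ} {p : ℝ} (QS : QSetup p) (η : ℝ → ℝ) (A : ℝ) (Λ : Set (Euc N))
    (x : Euc N) (u v : ℝ) : ℝ := pdU (Hpen QS η A Λ x) u v

/-- `H_v`. -/
def HpenV {N : ℕ} {p : ℝ} (QS : QSetup p) (η : ℝ → ℝ) (A : ℝ) (Λ : Set (Euc N))
    (x : Euc N) (u v : ℝ) : ℝ := pdV (Hpen QS η A Λ x) u v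

/-- `H_uu`. -/
def HpenUU {N : ℕ} {p : ℝ} (QS : QSetup p) (η : ℝ → ℝ) (A : ℝ) (Λ : Set (Euc N))
    (x : Euc N) (u v : ℝ) : ℝ := pdU (HpenU QS η A Λ x) u v

/-- `H_uv`. -/
def HpenUV {N : ℕ} {p : ℝ} (QS : QSetup p) (η : ℝ → ℝ) (A : ℝ) (Λ : Set (Euc N))
    (x : Euc N) (u v : ℝ) : ℝ := pdV (HpenU QS η A Λ x) u v

/-- `H_vv`. -/
def HpenVV {N : ℕ} {p : ℝ} (QS : QSetup p) (η : ℝ → ℝ) (A : ℝ) (Λ : Set (Euc N))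
    (x : Euc N) (u v : ℝ) : ℝ := pdV (HpenV QS η A Λ x) u v

/-- `‖(u,v)‖²_ε`. -/
def normSqE {N : ℕ} (s : ℝ) (P : PotSetup N) (ε : ℝ) (u v : Euc N → ℝ) : ℝ :=
  gagSq N s u + gagSq N s v + ∫ x, (P.V (ε • x) * u x ^ 2 + P.W (ε • x) * v x ^ 2)

/-- Membership in the space `X_ε`. -/
def MemXe {N : ℕ} (s : ℝ) (P : PotSetup N) (ε : ℝ) (u v : Euc N → ℝ) : Prop :=
  MemHs N s u ∧ MemHs N s v ∧
    Integrable (fun x => P.V (ε • x) * u x ^ 2 + P.W (ε • x) * v x ^ 2)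

/-- The penalized energy functional `J_ε`. -/
def Je {N : ℕ} (s : ℝ) {p : ℝ} (QS : QSetup p) (η : ℝ → ℝ) (A : ℝ) (P : PotSetup N)
    (ε : ℝ) (u v : Euc N → ℝ) : ℝ :=
  (1 / 2) * normSqE s P ε u v - ∫ x, Hpen QS η A P.Λ (ε • x) (u x) (v x)

/-- The pairing `⟨J'_ε(u,v),(φ,ψ)⟩`. -/
def pairJe {N : ℕ} (s : ℝ) {p : ℝ} (QS : QSetup p) (η : ℝ → ℝ) (A : ℝ) (P : PotSetup N)
    (ε : ℝ) (u v φ ψ : Euc N → ℝ) : ℝ :=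
  (∫ z : Euc N × Euc N, (u z.1 - u z.2) * (φ z.1 - φ z.2) / ‖z.1 - z.2‖ ^ ((N : ℝ) + 2 * s)) +
  (∫ z : Euc N × Euc N, (v z.1 - v z.2) * (ψ z.1 - ψ z.2) / ‖z.1 - z.2‖ ^ ((N : ℝ) + 2 * s)) +
  (∫ x, (P.V (ε • x) * u x * φ x + P.W (ε • x) * v x * ψ x)) -
  (∫ x, (φ x * HpenU QS η A P.Λ (ε • x) (u x) (v x) +
         ψ x * HpenV QS η A P.Λ (ε • x) (u x) (v x)))

/-- The Nehari manifold `N_ε` of the penalized functional `J_ε`. -/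
def NehariE {N : ℕ} (s : ℝ) {p : ℝ} (QS : QSetup p) (η : ℝ → ℝ) (A : ℝ) (P : PotSetup N)
    (ε : ℝ) : Set ((Euc N → ℝ) × (Euc N → ℝ)) :=
  {w | MemXe s P ε w.1 w.2 ∧ w ≠ (0, 0) ∧
    normSqE s P ε w.1 w.2 =
      ∫ x, (w.1 x * HpenU QS η A P.Λ (ε • x) (w.1 x) (w.2 x) +
            w.2 x * HpenV QS η A P.Λ (ε • x) (w.1 x) (w.2 x))}

end



open Topology in
lemma antitone_deriv_nonpos {f : ℝ → ℝ} (hf : Antitone f) {x : ℝ}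
    (hd : DifferentiableAt ℝ f x) : deriv f x ≤ 0 := by
  have h := hd.hasDerivAt
  rw [hasDerivAt_iff_tendsto_slope] at h
  refine le_of_tendsto h ?_
  filter_upwards [self_mem_nhdsWithin] with t ht
  have ht' : t ≠ x := ht
  rcases lt_or_gt_of_ne ht' with h1 | h1
  · have : f x ≤ f t := hf h1.le
    have hden : t - x < 0 := by linarith
    rw [slope_def_field]
    exact div_nonpos_of_nonneg_of_nonpos (by linarith) hden.le
  · have : f t ≤ f x := hf h1.le
    have hden : 0 < t - x := by linarith
    rw [slope_def_field]
    exact div_nonpos_of_nonpos_of_nonneg (by linarith) hden.le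

open Topology in
lemma deriv_zero_of_eventually_zero {f : ℝ → ℝ} {x : ℝ} (h : ∀ᶠ t in 𝓝 x, f t = 0) :
    deriv f x = 0 := by
  have : f =ᶠ[𝓝 x] fun _ => (0 : ℝ) := h
  rw [this.deriv_eq, deriv_const]

lemma Q_nonneg {p : ℝ} (QS : QSetup p) (u v : ℝ) : 0 ≤ QS.Q u v := by
  by_cases hu : 0 < u
  · by_cases hv : 0 < v
    · exact (QS.q5 u v hu hv).le
    · push_neg at hv; rw [QS.ext_zero u v (Or.inr hv)]
  · push_neg at hu; rw [QS.ext_zero u v (Or.inl hu)]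

open Topology in
lemma euler {p : ℝ} (QS : QSetup p) {u v : ℝ} (hu : 0 < u) (hv : 0 < v) :
    HasDerivAt (fun t => QS.Q t v) (pdU QS.Q u v) u ∧
    HasDerivAt (fun t => QS.Q u t) (pdV QS.Q u v) v ∧
    p * QS.Q u v = u * pdU QS.Q u v + v * pdV QS.Q u v := by
  have hmem : (Ici (0:ℝ) ×ˢ Ici (0:ℝ)) ∈ 𝓝 ((u, v) : ℝ × ℝ) := by
    have h1 : (Ioi (0:ℝ) ×ˢ Ioi (0:ℝ)) ∈ 𝓝 ((u, v) : ℝ × ℝ) :=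
      (isOpen_Ioi.prod isOpen_Ioi).mem_nhds ⟨hu, hv⟩
    exact Filter.mem_of_superset h1 (Set.prod_mono Ioi_subset_Ici_self Ioi_subset_Ici_self)
  have hF : DifferentiableAt ℝ (fun z : ℝ × ℝ => QS.Q z.1 z.2) ((u, v) : ℝ × ℝ) :=
    (QS.smooth.contDiffAt hmem).differentiableAt (by norm_num)
  have hD := hF.hasFDerivAt
  set D := fderiv ℝ (fun z : ℝ × ℝ => QS.Q z.1 z.2) ((u, v) : ℝ × ℝ) with hDdef
  have hcu : HasDerivAt (fun t : ℝ => ((t, v) : ℝ × ℝ)) (1, 0) u :=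
    (hasDerivAt_id u).prodMk (hasDerivAt_const u v)
  have hU : HasDerivAt (fun t => QS.Q t v) (D (1, 0)) u := by
    have := hD.comp_hasDerivAt u hcu; exact this
  have hcv : HasDerivAt (fun t : ℝ => ((u, t) : ℝ × ℝ)) (0, 1) v :=
    (hasDerivAt_const v u).prodMk (hasDerivAt_id v)
  have hV : HasDerivAt (fun t => QS.Q u t) (D (0, 1)) v := hD.comp_hasDerivAt v hcv
  have hpdU : pdU QS.Q u v = D (1, 0) := hU.deriv
  have hpdV : pdV QS.Q u v = D (0, 1) := hV.deriv
  have hc1 : HasDerivAt (fun t : ℝ => ((t * u, t * v) : ℝ × ℝ)) (u, v) 1 := by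
    have h1 : HasDerivAt (fun t : ℝ => t * u) u 1 := by
      simpa using (hasDerivAt_id (1:ℝ)).mul_const u
    have h2 : HasDerivAt (fun t : ℝ => t * v) v 1 := by
      simpa using (hasDerivAt_id (1:ℝ)).mul_const v
    exact h1.prodMk h2
  have hg : HasDerivAt (fun t : ℝ => QS.Q (t * u) (t * v)) (D (u, v)) 1 := by
    have hD' : HasFDerivAt (fun z : ℝ × ℝ => QS.Q z.1 z.2) D
        ((fun t : ℝ => ((t * u, t * v) : ℝ × ℝ)) 1) := by simpa using hD
    exact hD'.comp_hasDerivAt 1 hc1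
  have hg2 : HasDerivAt (fun t : ℝ => t ^ p * QS.Q u v) (p * QS.Q u v) 1 := by
    have := (Real.hasDerivAt_rpow_const (x := (1:ℝ)) (p := p)
      (Or.inl one_ne_zero)).mul_const (QS.Q u v)
    simpa using this
  have heq : (fun t : ℝ => t ^ p * QS.Q u v) =ᶠ[𝓝 1]
      (fun t : ℝ => QS.Q (t * u) (t * v)) := by
    filter_upwards [Ioi_mem_nhds one_pos] with t ht
    exact (QS.q1 t ht u v hu.le hv.le).symm
  have hkey : D (u, v) = p * QS.Q u v :=
    (hg.congr_of_eventuallyEq heq).unique hg2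
  have hlin : D (u, v) = u * D (1, 0) + v * D (0, 1) := by
    have hvec : ((u, v) : ℝ × ℝ) = u • ((1:ℝ), (0:ℝ)) + v • ((0:ℝ), (1:ℝ)) := by
      simp [Prod.ext_iff]
    rw [hvec, D.map_add, D.map_smul, D.map_smul]
    simp [smul_eq_mul]
  refine ⟨by rw [hpdU]; exact hU, by rw [hpdV]; exact hV, ?_⟩
  rw [hpdU, hpdV, ← hlin, hkey]

lemma Aconst_spec {p : ℝ} (QS : QSetup p) (hp : 2 < p) {a : ℝ} (ha : 0 < a) :
    0 ≤ Aconst QS a ∧ ∀ u v : ℝ, a ≤ Real.sqrt (u ^ 2 + v ^ 2) →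
      Real.sqrt (u ^ 2 + v ^ 2) ≤ 5 * a → QS.Q u v ≤ Aconst QS a * (u ^ 2 + v ^ 2) := by
  obtain ⟨C, hC, hC2⟩ := QS.q2
  set M := 5 * a * (C * (2 * (5 * a) ^ (p - 1))) with hM
  have hM0 : 0 ≤ M := by positivity
  have hQle : ∀ u v : ℝ, Real.sqrt (u ^ 2 + v ^ 2) ≤ 5 * a → QS.Q u v ≤ M := by
    intro u v hr
    by_cases hu : 0 < u
    · by_cases hv : 0 < v
      · obtain ⟨_, _, heu⟩ := euler QS hu hv
        have hu5 : u ≤ 5 * a := by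
          have h := Real.sqrt_le_sqrt (show u ^ 2 ≤ u ^ 2 + v ^ 2 by nlinarith)
          rw [Real.sqrt_sq hu.le] at h
          linarith
        have hv5 : v ≤ 5 * a := by
          have h := Real.sqrt_le_sqrt (show v ^ 2 ≤ u ^ 2 + v ^ 2 by nlinarith)
          rw [Real.sqrt_sq hv.le] at h
          linarith
        obtain ⟨hQu, hQv⟩ := QS.q6 u v hu.le hv.le
        have habs := hC2 u v hu.le hv.le
        rw [abs_of_nonneg hQu, abs_of_nonneg hQv] at habs
        have hup : u ^ (p - 1) ≤ (5 * a) ^ (p - 1) :=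
          Real.rpow_le_rpow hu.le hu5 (by linarith)
        have hvp : v ^ (p - 1) ≤ (5 * a) ^ (p - 1) :=
          Real.rpow_le_rpow hv.le hv5 (by linarith)
        have hbound : u * pdU QS.Q u v + v * pdV QS.Q u v ≤ M := by
          have h1 : u * pdU QS.Q u v ≤ 5 * a * pdU QS.Q u v := by nlinarith
          have h2 : v * pdV QS.Q u v ≤ 5 * a * pdV QS.Q u v := by nlinarith
          have h3 : pdU QS.Q u v + pdV QS.Q u v ≤ C * (2 * (5 * a) ^ (p - 1)) := by
            nlinarith
          calc u * pdU QS.Q u v + v * pdV QS.Q u v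
              ≤ 5 * a * (pdU QS.Q u v + pdV QS.Q u v) := by linarith
            _ ≤ M := by rw [hM]; nlinarith
        have hq0 : 0 ≤ QS.Q u v := Q_nonneg QS u v
        nlinarith
      · push_neg at hv; rw [QS.ext_zero u v (Or.inr hv)]; exact hM0
    · push_neg at hu; rw [QS.ext_zero u v (Or.inl hu)]; exact hM0
  set S := ((fun z : ℝ × ℝ => QS.Q z.1 z.2 / (z.1 ^ 2 + z.2 ^ 2)) ''
    {z : ℝ × ℝ | a ≤ Real.sqrt (z.1 ^ 2 + z.2 ^ 2) ∧ Real.sqrt (z.1 ^ 2 + z.2 ^ 2) ≤ 5 * a})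
    with hS
  have hbdd : BddAbove S := by
    refine ⟨M / a ^ 2, ?_⟩
    rintro y ⟨z, ⟨hz1, hz2⟩, rfl⟩
    have hd : a ^ 2 ≤ z.1 ^ 2 + z.2 ^ 2 := by
      have := Real.sqrt_le_sqrt (le_of_eq (rfl : z.1 ^ 2 + z.2 ^ 2 = z.1 ^ 2 + z.2 ^ 2))
      have h2 : a ^ 2 ≤ (Real.sqrt (z.1 ^ 2 + z.2 ^ 2)) ^ 2 := by nlinarith
      rwa [Real.sq_sqrt (by positivity)] at h2
    have hQ : QS.Q z.1 z.2 ≤ M := hQle z.1 z.2 hz2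
    have hq0 : 0 ≤ QS.Q z.1 z.2 := Q_nonneg QS z.1 z.2
    have ha2 : (0:ℝ) < a ^ 2 := by positivity
    exact div_le_div₀ hM0 hQ ha2 hd
  have hmem0 : (0:ℝ) ∈ S := by
    refine ⟨(a, 0), ⟨?_, ?_⟩, ?_⟩
    · simp [Real.sqrt_sq ha.le]
    · simp [Real.sqrt_sq ha.le]; linarith
    · simp [QS.ext_zero a 0 (Or.inr le_rfl)]
  constructor
  · exact le_csSup hbdd hmem0
  · intro u v h1 h2
    have hmem : QS.Q u v / (u ^ 2 + v ^ 2) ∈ S := ⟨(u, v), ⟨h1, h2⟩, rfl⟩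
    have hle : QS.Q u v / (u ^ 2 + v ^ 2) ≤ Aconst QS a := le_csSup hbdd hmem
    have hd : (0:ℝ) < u ^ 2 + v ^ 2 := by
      have h2' : a ^ 2 ≤ (Real.sqrt (u ^ 2 + v ^ 2)) ^ 2 := by nlinarith
      rw [Real.sq_sqrt (by positivity)] at h2'
      nlinarith
    rw [div_le_iff₀ hd] at hle
    linarith [hle]

lemma hatSlice (η : ℝ → ℝ) (hη : ContDiff ℝ 2 η) (A : ℝ) {q : ℝ → ℝ} {dq c w : ℝ}
    (h0 : w ^ 2 + c ^ 2 ≠ 0) (hq : HasDerivAt q dq w) :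
    HasDerivAt (fun t => η (Real.sqrt (t ^ 2 + c ^ 2)) * q t +
        (1 - η (Real.sqrt (t ^ 2 + c ^ 2))) * (A * (t ^ 2 + c ^ 2)))
      (deriv η (Real.sqrt (w ^ 2 + c ^ 2)) * (w / Real.sqrt (w ^ 2 + c ^ 2)) *
          (q w - A * (w ^ 2 + c ^ 2))
        + η (Real.sqrt (w ^ 2 + c ^ 2)) * dq
        + (1 - η (Real.sqrt (w ^ 2 + c ^ 2))) * (A * (2 * w))) w := by
  have hr2 : (0:ℝ) < w ^ 2 + c ^ 2 := lt_of_le_of_ne (by positivity) (Ne.symm h0)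
  set r := Real.sqrt (w ^ 2 + c ^ 2) with hrdef
  have hrpos : 0 < r := Real.sqrt_pos.2 hr2
  have hinner : HasDerivAt (fun t : ℝ => t ^ 2 + c ^ 2) (2 * w) w := by
    simpa using (hasDerivAt_pow 2 w).add_const (c ^ 2)
  have hsq : HasDerivAt (fun t => Real.sqrt (t ^ 2 + c ^ 2)) (w / r) w := by
    have h := (Real.hasDerivAt_sqrt (ne_of_gt hr2)).comp w hinner
    refine h.congr_deriv ?_
    rw [← hrdef]
    field_simp
  have hηd : HasDerivAt η (deriv η r) r :=
    ((hη.differentiable (by norm_num)) r).hasDerivAt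
  have hcomp : HasDerivAt (fun t => η (Real.sqrt (t ^ 2 + c ^ 2)))
      (deriv η r * (w / r)) w := hηd.comp w hsq
  have hfull := (hcomp.mul hq).add
    (((hasDerivAt_const w (1:ℝ)).sub hcomp).mul (hinner.const_mul A))
  refine hfull.congr_deriv ?_
  simp only [Pi.sub_apply]
  rw [← hrdef]
  ring


open Topology in
lemma eta_deriv_zero {a cη : ℝ} (E : EtaSetup a cη) {r : ℝ} (h : r < a ∨ 5 * a < r) :
    deriv E.η r = 0 := by
  rcases h with h | h
  · have hev : E.η =ᶠ[𝓝 r] fun _ => (1:ℝ) := by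
      filter_upwards [Iio_mem_nhds h] with t ht
      exact E.eq_one t ht.le
    rw [hev.deriv_eq, deriv_const]
  · have hev : E.η =ᶠ[𝓝 r] fun _ => (0:ℝ) := by
      filter_upwards [Ioi_mem_nhds h] with t ht
      exact E.eq_zero t ht.le
    rw [hev.deriv_eq, deriv_const]

set_option maxHeartbeats 1000000 in
/-- for every `a > 0` and `(u,v) ∈ ℝ²`,
`p H(x,u,v) = u H_u(x,u,v) + v H_v(x,u,v)` on `Λ` and
`2 H(x,u,v) ≤ u H_u(x,u,v) + v H_v(x,u,v)` on `ℝ^N \ Λ`. -/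
theorem stmt2 {N : ℕ} (s p : ℝ) (hs : 0 < s ∧ s < 1) (hN : 2 * s < (N : ℝ))
    (hp : 2 < p ∧ p < 2 * (N : ℝ) / ((N : ℝ) - 2 * s))
    (QS : QSetup p) (Λ : Set (Euc N)) (hΛo : IsOpen Λ) (hΛb : Bornology.IsBounded Λ)
    (cη : ℝ) (hcη : 0 < cη) :
    ∀ a : ℝ, 0 < a → ∀ E : EtaSetup a cη, ∀ u v : ℝ,
      (∀ x ∈ Λ,
        p * Hpen QS E.η (Aconst QS a) Λ x u v =
          u * HpenU QS E.η (Aconst QS a) Λ x u v +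
          v * HpenV QS E.η (Aconst QS a) Λ x u v) ∧
      (∀ x ∉ Λ,
        2 * Hpen QS E.η (Aconst QS a) Λ x u v ≤
          u * HpenU QS E.η (Aconst QS a) Λ x u v +
          v * HpenV QS E.η (Aconst QS a) Λ x u v) := by
  intro a ha E u v
  set A := Aconst QS a with hAdef
  obtain ⟨hA0, hAbd⟩ := Aconst_spec QS hp.1 ha
  constructor
  · -- Part 1 : x ∈ Λ
    intro x hx
    have hind : Λ.indicator (fun _ => (1:ℝ)) x = 1 := Set.indicator_of_mem hx _
    have hH : ∀ a' b' : ℝ, Hpen QS E.η A Λ x a' b' = QS.Q a' b' := by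
      intro a' b'; simp [Hpen, hind]
    have hHU : HpenU QS E.η A Λ x u v = pdU QS.Q u v := by
      unfold HpenU pdU
      congr 1
      funext t
      exact hH t v
    have hHV : HpenV QS E.η A Λ x u v = pdV QS.Q u v := by
      unfold HpenV pdV
      congr 1
      funext t
      exact hH u t
    rw [hH, hHU, hHV]
    by_cases hu : 0 < u
    · by_cases hv : 0 < v
      · exact (euler QS hu hv).2.2
      · push_neg at hv
        have hQ : QS.Q u v = 0 := QS.ext_zero u v (Or.inr hv)
        have hU0 : pdU QS.Q u v = 0 := by
          unfold pdU
          apply deriv_zero_of_eventually_zero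
          filter_upwards with t
          exact QS.ext_zero t v (Or.inr hv)
        have hVterm : v * pdV QS.Q u v = 0 := by
          rcases lt_or_eq_of_le hv with h | h
          · have h0 : pdV QS.Q u v = 0 := by
              unfold pdV
              apply deriv_zero_of_eventually_zero
              filter_upwards [Iio_mem_nhds h] with t ht
              exact QS.ext_zero u t (Or.inr ht.le)
            rw [h0, mul_zero]
          · rw [h, zero_mul]
        rw [hQ, hU0]
        rw [mul_zero, mul_zero, zero_add, hVterm]
    · push_neg at hu
      have hQ : QS.Q u v = 0 := QS.ext_zero u v (Or.inl hu)
      have hV0 : pdV QS.Q u v = 0 := by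
        unfold pdV
        apply deriv_zero_of_eventually_zero
        filter_upwards with t
        exact QS.ext_zero u t (Or.inl hu)
      have hUterm : u * pdU QS.Q u v = 0 := by
        rcases lt_or_eq_of_le hu with h | h
        · have h0 : pdU QS.Q u v = 0 := by
            unfold pdU
            apply deriv_zero_of_eventually_zero
            filter_upwards [Iio_mem_nhds h] with t ht
            exact QS.ext_zero t v (Or.inl ht.le)
          rw [h0, mul_zero]
        · rw [h, zero_mul]
      rw [hQ, hV0]
      rw [mul_zero, mul_zero, hUterm, zero_add]
  · -- Part 2 : x ∉ Λ
    intro x hx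
    have hind : Λ.indicator (fun _ => (1:ℝ)) x = 0 := Set.indicator_of_notMem hx _
    have hH : ∀ a' b' : ℝ, Hpen QS E.η A Λ x a' b' = Qhat QS E.η A a' b' := by
      intro a' b'; simp [Hpen, hind]
    by_cases h00 : u = 0 ∧ v = 0
    · obtain ⟨hu0, hv0⟩ := h00
      subst hu0; subst hv0
      rw [hH]
      simp [Qhat, QS.ext_zero 0 0 (Or.inl le_rfl)]
    · have hne : u ^ 2 + v ^ 2 ≠ 0 := by
        rcases not_and_or.1 h00 with h | h <;> positivity
      have hr2 : (0:ℝ) < u ^ 2 + v ^ 2 := lt_of_le_of_ne (by positivity) (Ne.symm hne)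
      set r := Real.sqrt (u ^ 2 + v ^ 2) with hrdef
      have hrpos : 0 < r := Real.sqrt_pos.2 hr2
      have hrsq : r ^ 2 = u ^ 2 + v ^ 2 := Real.sq_sqrt hr2.le
      have hder_le : deriv E.η r ≤ 0 :=
        antitone_deriv_nonpos E.anti ((E.smooth.differentiable (by norm_num)) r)
      have hη01 := E.mem01 r
      have hrr : Real.sqrt (v ^ 2 + u ^ 2) = r := by rw [hrdef, add_comm]
      have hfU : (fun t => Hpen QS E.η A Λ x t v) =
          (fun t => E.η (Real.sqrt (t ^ 2 + v ^ 2)) * QS.Q t v +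
            (1 - E.η (Real.sqrt (t ^ 2 + v ^ 2))) * (A * (t ^ 2 + v ^ 2))) := by
        funext t
        rw [hH]
        rfl
      have hfV : (fun t => Hpen QS E.η A Λ x u t) =
          (fun t => E.η (Real.sqrt (t ^ 2 + u ^ 2)) * QS.Q u t +
            (1 - E.η (Real.sqrt (t ^ 2 + u ^ 2))) * (A * (t ^ 2 + u ^ 2))) := by
        funext t
        rw [hH]
        unfold Qhat
        rw [add_comm (u ^ 2) (t ^ 2)]
      by_cases hcase : 0 < u ∧ 0 < v
      · obtain ⟨hu, hv⟩ := hcase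
        obtain ⟨hdU, hdV, heuler⟩ := euler QS hu hv
        have hq0 : 0 < QS.Q u v := QS.q5 u v hu hv
        have hUder := hatSlice E.η E.smooth A (c := v) (w := u) hne hdU
        have hVder := hatSlice E.η E.smooth A (c := u) (w := v)
          (by rw [add_comm]; exact hne) hdV
        have hUval : HpenU QS E.η A Λ x u v =
            deriv E.η r * (u / r) * (QS.Q u v - A * (u ^ 2 + v ^ 2)) +
              E.η r * pdU QS.Q u v + (1 - E.η r) * (A * (2 * u)) := by
          unfold HpenU pdU
          rw [hfU]
          exact hUder.deriv
        have hVval : HpenV QS E.η A Λ x u v =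
            deriv E.η r * (v / r) * (QS.Q u v - A * (u ^ 2 + v ^ 2)) +
              E.η r * pdV QS.Q u v + (1 - E.η r) * (A * (2 * v)) := by
          unfold HpenV pdV
          rw [hfV]
          have hder := hVder.deriv
          rw [hrr, add_comm (v ^ 2) (u ^ 2)] at hder
          rw [hder]
          rfl
        have hQhat : Hpen QS E.η A Λ x u v =
            E.η r * QS.Q u v + (1 - E.η r) * (A * (u ^ 2 + v ^ 2)) := by
          rw [hH]
          rfl
        rw [hQhat, hUval, hVval]
        have hkey : 0 ≤ deriv E.η r * r * (QS.Q u v - A * (u ^ 2 + v ^ 2)) := by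
          by_cases hra : r < a
          · have h0 : deriv E.η r = 0 := eta_deriv_zero E (Or.inl hra)
            rw [h0]; simp
          · by_cases hrb : 5 * a < r
            · have h0 : deriv E.η r = 0 := eta_deriv_zero E (Or.inr hrb)
              rw [h0]; simp
            · push_neg at hra hrb
              have hQle : QS.Q u v ≤ A * (u ^ 2 + v ^ 2) := hAbd u v hra hrb
              have h1 : deriv E.η r * r ≤ 0 :=
                mul_nonpos_of_nonpos_of_nonneg hder_le hrpos.le
              nlinarith [mul_nonneg (neg_nonneg.2 h1)
                (neg_nonneg.2 (by linarith : QS.Q u v - A * (u ^ 2 + v ^ 2) ≤ 0))]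
        have hsum : u * (u / r) + v * (v / r) = r := by
          have h1 : u * (u / r) + v * (v / r) = (u ^ 2 + v ^ 2) / r := by ring
          rw [h1, ← hrsq, sq, mul_div_assoc, div_self hrpos.ne', mul_one]
        have hexp : u * (deriv E.η r * (u / r) * (QS.Q u v - A * (u ^ 2 + v ^ 2)) +
              E.η r * pdU QS.Q u v + (1 - E.η r) * (A * (2 * u))) +
            v * (deriv E.η r * (v / r) * (QS.Q u v - A * (u ^ 2 + v ^ 2)) +
              E.η r * pdV QS.Q u v + (1 - E.η r) * (A * (2 * v))) =
            deriv E.η r * r * (QS.Q u v - A * (u ^ 2 + v ^ 2)) + E.η r * (p * QS.Q u v) +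
              2 * (1 - E.η r) * (A * (u ^ 2 + v ^ 2)) := by
          linear_combination (deriv E.η r * (QS.Q u v - A * (u ^ 2 + v ^ 2))) * hsum +
            E.η r * heuler.symm
        rw [hexp]
        nlinarith [hkey, mul_nonneg (by linarith [hp.1] : (0:ℝ) ≤ p - 2)
          (mul_nonneg hη01.1 hq0.le)]
      · have hQ0 : QS.Q u v = 0 := by
          rcases not_and_or.1 hcase with h | h
          · push_neg at h; exact QS.ext_zero u v (Or.inl h)
          · push_neg at h; exact QS.ext_zero u v (Or.inr h)
        have hUterm : u * HpenU QS E.η A Λ x u v =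
            u * (deriv E.η r * (u / r) * (-(A * (u ^ 2 + v ^ 2))) +
              (1 - E.η r) * (A * (2 * u))) := by
          rcases eq_or_ne u 0 with h | h
          · rw [h, zero_mul, zero_mul]
          · have hev : HasDerivAt (fun t => QS.Q t v) 0 u := by
              apply (hasDerivAt_const u (0:ℝ)).congr_of_eventuallyEq
              rcases not_and_or.1 hcase with hcu | hcv
              · push_neg at hcu
                have hu' : u < 0 := lt_of_le_of_ne hcu h
                filter_upwards [Iio_mem_nhds hu'] with t ht
                exact QS.ext_zero t v (Or.inl ht.le)
              · push_neg at hcv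
                filter_upwards with t
                exact QS.ext_zero t v (Or.inr hcv)
            have hUder := hatSlice E.η E.smooth A (c := v) (w := u) hne hev
            have hval : HpenU QS E.η A Λ x u v =
                deriv E.η r * (u / r) * (QS.Q u v - A * (u ^ 2 + v ^ 2)) +
                  E.η r * 0 + (1 - E.η r) * (A * (2 * u)) := by
              unfold HpenU pdU
              rw [hfU]
              exact hUder.deriv
            rw [hval, hQ0]
            ring
        have hVterm : v * HpenV QS E.η A Λ x u v =
            v * (deriv E.η r * (v / r) * (-(A * (u ^ 2 + v ^ 2))) +
              (1 - E.η r) * (A * (2 * v))) := by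
          rcases eq_or_ne v 0 with h | h
          · rw [h, zero_mul, zero_mul]
          · have hev : HasDerivAt (fun t => QS.Q u t) 0 v := by
              apply (hasDerivAt_const v (0:ℝ)).congr_of_eventuallyEq
              rcases not_and_or.1 hcase with hcu | hcv
              · push_neg at hcu
                filter_upwards with t
                exact QS.ext_zero u t (Or.inl hcu)
              · push_neg at hcv
                have hv' : v < 0 := lt_of_le_of_ne hcv h
                filter_upwards [Iio_mem_nhds hv'] with t ht
                exact QS.ext_zero u t (Or.inr ht.le)
            have hVder := hatSlice E.η E.smooth A (c := u) (w := v)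
              (by rw [add_comm]; exact hne) hev
            have hval : HpenV QS E.η A Λ x u v =
                deriv E.η r * (v / r) * (QS.Q u v - A * (u ^ 2 + v ^ 2)) +
                  E.η r * 0 + (1 - E.η r) * (A * (2 * v)) := by
              unfold HpenV pdV
              rw [hfV]
              have hder := hVder.deriv
              rw [hrr] at hder
              rw [hder]
              rw [add_comm (v ^ 2) (u ^ 2)]
            rw [hval, hQ0]
            ring
        have hQhat : Hpen QS E.η A Λ x u v =
            (1 - E.η r) * (A * (u ^ 2 + v ^ 2)) := by
          rw [hH]
          unfold Qhat
          rw [← hrdef, hQ0]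
          ring
        rw [hQhat, hUterm, hVterm]
        have hsum : u * (u / r) + v * (v / r) = r := by
          have h1 : u * (u / r) + v * (v / r) = (u ^ 2 + v ^ 2) / r := by ring
          rw [h1, ← hrsq, sq, mul_div_assoc, div_self hrpos.ne', mul_one]
        have hkey : 0 ≤ -(deriv E.η r) * r * (A * (u ^ 2 + v ^ 2)) := by
          apply mul_nonneg (mul_nonneg (by linarith) hrpos.le)
          positivity
        nlinarith [hkey, hη01.1, hη01.2]
end

section
/- For every k > 0 there exists a₀ > 0 such that for every a ∈ (0,a₀), every x ∈ ℝ^N ∖ Λ and every (u,v) ∈ ℝ²: u H_u(x,u,v) + v H_v(x,u,v) ≤ (1/k)(V(x)u² + W(x)v²). -/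
open MeasureTheory Real Set Filter

section Aux

open Real Set Filter

lemma sqrtDeriv (c u : ℝ) (hu : u ≠ 0) :
    HasDerivAt (fun t : ℝ => Real.sqrt (t^2 + c^2)) (u / Real.sqrt (u^2 + c^2)) u := by
  have hR : u^2 + c^2 ≠ 0 := by positivity
  have hq : HasDerivAt (fun t : ℝ => t^2 + c^2) (2*u) u := by
    simpa using (hasDerivAt_pow 2 u).add_const (c^2)
  have := (Real.hasDerivAt_sqrt hR).comp u hq
  refine HasDerivAt.congr_deriv this ?_
  have hs : Real.sqrt (u^2+c^2) ≠ 0 := by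
    simpa [Real.sqrt_eq_zero'] using by positivity
  field_simp

lemma sqrtDeriv' (c u : ℝ) (hu : u ≠ 0) :
    HasDerivAt (fun t : ℝ => Real.sqrt (c^2 + t^2)) (u / Real.sqrt (c^2 + u^2)) u := by
  have h := sqrtDeriv c u hu
  have he : (fun t : ℝ => Real.sqrt (t^2 + c^2)) = (fun t : ℝ => Real.sqrt (c^2 + t^2)) := by
    funext t; rw [add_comm]
  rw [he] at h; rw [add_comm (c^2) (u^2)]; exact h

lemma etaRadial (η : ℝ → ℝ) (hη : ContDiff ℝ 2 η) (c u : ℝ) (hu : u ≠ 0) :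
    HasDerivAt (fun t : ℝ => η (Real.sqrt (t^2 + c^2)))
      (deriv η (Real.sqrt (u^2+c^2)) * (u / Real.sqrt (u^2+c^2))) u := by
  have hd : HasDerivAt η (deriv η (Real.sqrt (u^2+c^2))) (Real.sqrt (u^2+c^2)) :=
    (hη.differentiable (by norm_num) _).hasDerivAt
  exact hd.comp u (sqrtDeriv c u hu)

lemma etaRadial' (η : ℝ → ℝ) (hη : ContDiff ℝ 2 η) (c u : ℝ) (hu : u ≠ 0) :
    HasDerivAt (fun t : ℝ => η (Real.sqrt (c^2 + t^2)))
      (deriv η (Real.sqrt (c^2+u^2)) * (u / Real.sqrt (c^2+u^2))) u := by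
  have hd : HasDerivAt η (deriv η (Real.sqrt (c^2+u^2))) (Real.sqrt (c^2+u^2)) :=
    (hη.differentiable (by norm_num) _).hasDerivAt
  exact hd.comp u (sqrtDeriv' c u hu)

lemma gRadial (η : ℝ → ℝ) (hη : ContDiff ℝ 2 η) (A' c u : ℝ) (hu : u ≠ 0) :
    HasDerivAt (fun t : ℝ => (1 - η (Real.sqrt (t^2+c^2))) * (A' * (t^2+c^2)))
      ((0 - deriv η (Real.sqrt (u^2+c^2)) * (u / Real.sqrt (u^2+c^2))) * (A' * (u^2+c^2))
        + (1 - η (Real.sqrt (u^2+c^2))) * (A' * (2*u))) u := by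
  have h1 : HasDerivAt (fun t : ℝ => 1 - η (Real.sqrt (t^2+c^2)))
      (0 - deriv η (Real.sqrt (u^2+c^2)) * (u / Real.sqrt (u^2+c^2))) u :=
    (hasDerivAt_const u (1:ℝ)).sub (etaRadial η hη c u hu)
  have h2 : HasDerivAt (fun t : ℝ => A' * (t^2+c^2)) (A' * (2*u)) u := by
    have hq : HasDerivAt (fun t : ℝ => t^2 + c^2) (2*u) u := by
      simpa using (hasDerivAt_pow 2 u).add_const (c^2)
    exact hq.const_mul A'
  exact h1.mul h2

lemma gRadial' (η : ℝ → ℝ) (hη : ContDiff ℝ 2 η) (A' c u : ℝ) (hu : u ≠ 0) :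
    HasDerivAt (fun t : ℝ => (1 - η (Real.sqrt (c^2+t^2))) * (A' * (c^2+t^2)))
      ((0 - deriv η (Real.sqrt (c^2+u^2)) * (u / Real.sqrt (c^2+u^2))) * (A' * (c^2+u^2))
        + (1 - η (Real.sqrt (c^2+u^2))) * (A' * (2*u))) u := by
  have h1 : HasDerivAt (fun t : ℝ => 1 - η (Real.sqrt (c^2+t^2)))
      (0 - deriv η (Real.sqrt (c^2+u^2)) * (u / Real.sqrt (c^2+u^2))) u :=
    (hasDerivAt_const u (1:ℝ)).sub (etaRadial' η hη c u hu)
  have h2 : HasDerivAt (fun t : ℝ => A' * (c^2+t^2)) (A' * (2*u)) u := by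
    have hq : HasDerivAt (fun t : ℝ => c^2 + t^2) (2*u) u := by
      simpa using (hasDerivAt_pow 2 u).const_add (c^2)
    exact hq.const_mul A'
  exact h1.mul h2

variable {p : ℝ}

lemma pdU_Q_zero_of_v_nonpos (QS : QSetup p) (u v : ℝ) (hv : v ≤ 0) : pdU QS.Q u v = 0 := by
  have : (fun t : ℝ => QS.Q t v) = (fun _ => (0:ℝ)) := by
    funext t; exact QS.ext_zero t v (Or.inr hv)
  simp [pdU, this]

lemma pdU_Q_zero_of_u_neg (QS : QSetup p) (u v : ℝ) (hu : u < 0) : pdU QS.Q u v = 0 := by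
  have hev : (fun t : ℝ => QS.Q t v) =ᶠ[nhds u] (fun _ => (0:ℝ)) := by
    filter_upwards [Iio_mem_nhds hu] with t ht
    exact QS.ext_zero t v (Or.inl (le_of_lt ht))
  have := hev.deriv_eq
  simpa [pdU] using this

lemma pdV_Q_zero_of_u_nonpos (QS : QSetup p) (u v : ℝ) (hu : u ≤ 0) : pdV QS.Q u v = 0 := by
  have : (fun t : ℝ => QS.Q u t) = (fun _ => (0:ℝ)) := by
    funext t; exact QS.ext_zero u t (Or.inl hu)
  simp [pdV, this]

lemma pdV_Q_zero_of_v_neg (QS : QSetup p) (u v : ℝ) (hv : v < 0) : pdV QS.Q u v = 0 := by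
  have hev : (fun t : ℝ => QS.Q u t) =ᶠ[nhds v] (fun _ => (0:ℝ)) := by
    filter_upwards [Iio_mem_nhds hv] with t ht
    exact QS.ext_zero u t (Or.inr (le_of_lt ht))
  have := hev.deriv_eq
  simpa [pdV] using this

lemma Q_diffAt (QS : QSetup p) {u v : ℝ} (hu : 0 < u) (hv : 0 < v) :
    DifferentiableAt ℝ (fun z : ℝ × ℝ => QS.Q z.1 z.2) (u, v) := by
  have hmem : Ici (0:ℝ) ×ˢ Ici (0:ℝ) ∈ nhds ((u, v) : ℝ × ℝ) := by
    have hopen : IsOpen (Ioi (0:ℝ) ×ˢ Ioi (0:ℝ)) := isOpen_Ioi.prod isOpen_Ioi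
    refine Filter.mem_of_superset (hopen.mem_nhds ⟨hu, hv⟩) ?_
    exact Set.prod_mono Ioi_subset_Ici_self Ioi_subset_Ici_self
  exact (QS.smooth.contDiffAt hmem).differentiableAt (by norm_num)

lemma hasDerivAt_Q_fst (QS : QSetup p) {u v : ℝ} (hu : 0 < u) (hv : 0 < v) :
    HasDerivAt (fun t : ℝ => QS.Q t v) (pdU QS.Q u v) u := by
  have hd : DifferentiableAt ℝ (fun t : ℝ => QS.Q t v) u := by
    exact (Q_diffAt QS hu hv).comp (g := fun z : ℝ × ℝ => QS.Q z.1 z.2) (f := fun t : ℝ => (t, v)) u ((differentiableAt_id).prodMk (differentiableAt_const v))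
  exact hd.hasDerivAt

lemma hasDerivAt_Q_snd (QS : QSetup p) {u v : ℝ} (hu : 0 < u) (hv : 0 < v) :
    HasDerivAt (fun t : ℝ => QS.Q u t) (pdV QS.Q u v) v := by
  have hd : DifferentiableAt ℝ (fun t : ℝ => QS.Q u t) v := by
    exact (Q_diffAt QS hu hv).comp v ((differentiableAt_const u).prodMk differentiableAt_id)
  exact hd.hasDerivAt

lemma exists_M (QS : QSetup p) :
    ∃ M : ℝ, 0 ≤ M ∧ ∀ u v : ℝ, |QS.Q u v| ≤ M * (Real.sqrt (u^2+v^2)) ^ p := by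
  classical
  set K : Set (ℝ × ℝ) := (Ici (0:ℝ) ×ˢ Ici (0:ℝ)) ∩ {z : ℝ × ℝ | z.1^2 + z.2^2 = 1} with hK
  have hclosed : IsClosed K :=
    (isClosed_Ici.prod isClosed_Ici).inter
      (isClosed_eq (by fun_prop) continuous_const)
  have hsub : K ⊆ Icc ((-1:ℝ), (-1:ℝ)) ((1:ℝ), (1:ℝ)) := by
    rintro ⟨x, y⟩ ⟨⟨hx, hy⟩, hxy⟩
    simp only [Set.mem_setOf_eq] at hxy
    simp only [Set.mem_Icc, Prod.mk_le_mk]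
    refine ⟨⟨by nlinarith, by nlinarith⟩, by nlinarith [sq_nonneg x, sq_nonneg y], by nlinarith [sq_nonneg x, sq_nonneg y]⟩
  have hKc : IsCompact K := IsCompact.of_isClosed_subset isCompact_Icc hclosed hsub
  have hne : K.Nonempty := ⟨(1, 0), ⟨⟨by norm_num, by norm_num⟩, by norm_num⟩⟩
  have hcont : ContinuousOn (fun z : ℝ × ℝ => |QS.Q z.1 z.2|) K :=
    (QS.smooth.continuousOn.mono Set.inter_subset_left).abs
  obtain ⟨z₀, hz₀K, hz₀⟩ := hKc.exists_isMaxOn hne hcont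
  refine ⟨|QS.Q z₀.1 z₀.2|, abs_nonneg _, ?_⟩
  intro u v
  have hM0 : (0:ℝ) ≤ |QS.Q z₀.1 z₀.2| := abs_nonneg _
  have hrpow0 : (0:ℝ) ≤ (Real.sqrt (u^2+v^2)) ^ p := Real.rpow_nonneg (Real.sqrt_nonneg _) p
  by_cases hu : 0 ≤ u
  · by_cases hv : 0 ≤ v
    · by_cases hR : u^2 + v^2 = 0
      · have hu0 : u = 0 := by nlinarith [sq_nonneg u, sq_nonneg v]
        have hv0 : v = 0 := by nlinarith [sq_nonneg u, sq_nonneg v]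
        rw [QS.ext_zero u v (Or.inl (le_of_eq hu0))]
        simpa using mul_nonneg hM0 hrpow0
      · have hRpos : 0 < u^2 + v^2 := lt_of_le_of_ne (by positivity) (Ne.symm hR)
        set r := Real.sqrt (u^2+v^2) with hr
        have hrpos : 0 < r := Real.sqrt_pos.2 hRpos
        have hr2 : r^2 = u^2 + v^2 := Real.sq_sqrt (le_of_lt hRpos)
        have hq1 := QS.q1 r hrpos (u/r) (v/r) (div_nonneg hu hrpos.le) (div_nonneg hv hrpos.le)
        have hru : r * (u/r) = u := by field_simp
        have hrv : r * (v/r) = v := by field_simp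
        rw [hru, hrv] at hq1
        have hmem : ((u/r, v/r) : ℝ × ℝ) ∈ K := by
          refine ⟨⟨div_nonneg hu hrpos.le, div_nonneg hv hrpos.le⟩, ?_⟩
        -- (u/r)^2+(v/r)^2 = 1
          simp only [Set.mem_setOf_eq]
          field_simp
          linarith [hr2]
        have hb := hz₀ hmem
        calc |QS.Q u v| = |r ^ p * QS.Q (u/r) (v/r)| := by rw [hq1]
          _ = r ^ p * |QS.Q (u/r) (v/r)| := by
              rw [abs_mul, abs_of_nonneg (Real.rpow_nonneg hrpos.le p)]
          _ ≤ r ^ p * |QS.Q z₀.1 z₀.2| := by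
              exact mul_le_mul_of_nonneg_left hb (Real.rpow_nonneg hrpos.le p)
          _ = |QS.Q z₀.1 z₀.2| * r ^ p := by ring
    · rw [QS.ext_zero u v (Or.inr (le_of_not_ge hv))]
      simpa using mul_nonneg hM0 hrpow0
  · rw [QS.ext_zero u v (Or.inl (le_of_not_ge hu))]
    simpa using mul_nonneg hM0 hrpow0

lemma Aconst_bounds (QS : QSetup p) (hp2 : 2 < p) {M : ℝ} (hM0 : 0 ≤ M)
    (hM : ∀ u v : ℝ, |QS.Q u v| ≤ M * (Real.sqrt (u^2+v^2)) ^ p) {a : ℝ} (ha : 0 < a) :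
    0 ≤ Aconst QS a ∧ Aconst QS a ≤ M * (5*a) ^ (p-2) := by
  have hB0 : (0:ℝ) ≤ M * (5*a) ^ (p-2) :=
    mul_nonneg hM0 (Real.rpow_nonneg (by linarith) _)
  have key : ∀ y ∈ ((fun z : ℝ × ℝ => QS.Q z.1 z.2 / (z.1 ^ 2 + z.2 ^ 2)) ''
      {z : ℝ × ℝ | a ≤ Real.sqrt (z.1 ^ 2 + z.2 ^ 2) ∧ Real.sqrt (z.1 ^ 2 + z.2 ^ 2) ≤ 5 * a}),
      y ≤ M * (5*a) ^ (p-2) := by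
    rintro y ⟨⟨x1, x2⟩, ⟨hx1, hx2⟩, rfl⟩
    simp only at hx1 hx2 ⊢
    set r := Real.sqrt (x1^2 + x2^2) with hrdef
    have hrnn : (0:ℝ) ≤ x1^2 + x2^2 := by positivity
    have hr2 : r^2 = x1^2 + x2^2 := Real.sq_sqrt hrnn
    have hrpos : 0 < r := lt_of_lt_of_le ha hx1
    have hRpos : 0 < x1^2 + x2^2 := by nlinarith
    rw [div_le_iff₀ hRpos]
    have h1 : QS.Q x1 x2 ≤ M * r ^ p := le_trans (le_abs_self _) (hM x1 x2)
    have h2 : r ^ p = r ^ (p-2) * (x1^2 + x2^2) := by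
      rw [← hr2, ← Real.rpow_two, ← Real.rpow_add hrpos]
      norm_num
    have h3 : r ^ (p-2) ≤ (5*a) ^ (p-2) :=
      Real.rpow_le_rpow hrpos.le hx2 (by linarith)
    calc QS.Q x1 x2 ≤ M * (r ^ (p-2) * (x1^2+x2^2)) := by rw [← h2]; exact h1
      _ ≤ M * ((5*a) ^ (p-2) * (x1^2+x2^2)) := by
          exact mul_le_mul_of_nonneg_left (mul_le_mul_of_nonneg_right h3 hRpos.le) hM0
      _ = M * (5*a) ^ (p-2) * (x1^2+x2^2) := by ring
  constructor
  · have hmem : (0:ℝ) ∈ ((fun z : ℝ × ℝ => QS.Q z.1 z.2 / (z.1 ^ 2 + z.2 ^ 2)) ''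
        {z : ℝ × ℝ | a ≤ Real.sqrt (z.1 ^ 2 + z.2 ^ 2) ∧ Real.sqrt (z.1 ^ 2 + z.2 ^ 2) ≤ 5 * a}) := by
      refine ⟨(a, 0), ?_, ?_⟩
      · simp only [Set.mem_setOf_eq]
        have h0 : Real.sqrt (a^2 + (0:ℝ)^2) = a := by
          rw [show a^2+(0:ℝ)^2 = a^2 by ring, Real.sqrt_sq ha.le]
        exact ⟨le_of_eq h0.symm, by rw [h0]; linarith⟩
      · simp [QS.ext_zero a 0 (Or.inr le_rfl)]
    exact le_csSup ⟨M * (5*a) ^ (p-2), fun y hy => key y hy⟩ hmem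
  · exact Real.sSup_le key hB0


lemma Tu_bound (QS : QSetup p) {η : ℝ → ℝ} (hη : ContDiff ℝ 2 η) {A' : ℝ} (hA' : 0 ≤ A')
    (u v : ℝ) :
    u * pdU (Qhat QS η A') u v ≤
      |deriv η (Real.sqrt (u^2+v^2))| * (u^2 / Real.sqrt (u^2+v^2)) *
        (|QS.Q u v| + A' * (u^2+v^2))
      + η (Real.sqrt (u^2+v^2)) * (u * pdU QS.Q u v)
      + (1 - η (Real.sqrt (u^2+v^2))) * (2 * A' * u^2) := by
  by_cases hu0 : u = 0
  · subst hu0; simp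
  · set r := Real.sqrt (u^2+v^2) with hrdef
    have hg := gRadial η hη A' v u hu0
    have hf : HasDerivAt (fun t : ℝ => η (Real.sqrt (t^2+v^2)) * QS.Q t v)
        (deriv η r * (u/r) * QS.Q u v + η r * pdU QS.Q u v) u := by
      by_cases hv : v ≤ 0
      · have hfun : (fun t : ℝ => η (Real.sqrt (t^2+v^2)) * QS.Q t v) = fun _ => (0:ℝ) := by
          funext t; rw [QS.ext_zero t v (Or.inr hv)]; ring
        have hQ0 : QS.Q u v = 0 := QS.ext_zero u v (Or.inr hv)
        have hp0 : pdU QS.Q u v = 0 := pdU_Q_zero_of_v_nonpos QS u v hv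
        rw [hfun, hQ0, hp0]
        simpa using hasDerivAt_const u (0:ℝ)
      · push_neg at hv
        rcases lt_trichotomy u 0 with hneg | hz | hpos
        · have hev : (fun t : ℝ => η (Real.sqrt (t^2+v^2)) * QS.Q t v) =ᶠ[nhds u]
              (fun _ => (0:ℝ)) := by
            filter_upwards [Iio_mem_nhds hneg] with t ht
            rw [QS.ext_zero t v (Or.inl ht.le)]; ring
          have hQ0 : QS.Q u v = 0 := QS.ext_zero u v (Or.inl hneg.le)
          have hp0 : pdU QS.Q u v = 0 := pdU_Q_zero_of_u_neg QS u v hneg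
          rw [hQ0, hp0]
          have h0 : HasDerivAt (fun _ : ℝ => (0:ℝ)) 0 u := hasDerivAt_const u 0
          simpa using h0.congr_of_eventuallyEq hev
        · exact absurd hz hu0
        · exact (etaRadial η hη v u hu0).mul (hasDerivAt_Q_fst QS hpos hv)
    have hsum := hf.add hg
    have hQhat : HasDerivAt (fun t : ℝ => Qhat QS η A' t v)
        ((deriv η r * (u/r) * QS.Q u v + η r * pdU QS.Q u v)
          + ((0 - deriv η r * (u / r)) * (A' * (u^2+v^2))
            + (1 - η r) * (A' * (2*u)))) u := hsum
    have hpd : pdU (Qhat QS η A') u v =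
        (deriv η r * (u/r) * QS.Q u v + η r * pdU QS.Q u v)
          + ((0 - deriv η r * (u / r)) * (A' * (u^2+v^2))
            + (1 - η r) * (A' * (2*u))) := hQhat.deriv
    rw [hpd]
    have hr0 : (0:ℝ) ≤ r := Real.sqrt_nonneg _
    have hdivnn : (0:ℝ) ≤ u^2 / r := by positivity
    have key1 : deriv η r * (u^2/r) * QS.Q u v ≤ |deriv η r| * (u^2/r) * |QS.Q u v| := by
      have h1 : deriv η r * QS.Q u v ≤ |deriv η r| * |QS.Q u v| :=
        (le_abs_self _).trans (le_of_eq (abs_mul _ _))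
      calc deriv η r * (u^2/r) * QS.Q u v = (u^2/r) * (deriv η r * QS.Q u v) := by ring
        _ ≤ (u^2/r) * (|deriv η r| * |QS.Q u v|) := mul_le_mul_of_nonneg_left h1 hdivnn
        _ = |deriv η r| * (u^2/r) * |QS.Q u v| := by ring
    have key2 : -(deriv η r) * (u^2/r) * (A' * (u^2+v^2)) ≤
        |deriv η r| * (u^2/r) * (A' * (u^2+v^2)) := by
      have hAR : (0:ℝ) ≤ A' * (u^2+v^2) := by positivity
      exact mul_le_mul_of_nonneg_right
        (mul_le_mul_of_nonneg_right (neg_le_abs _) hdivnn) hAR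
    have hrpos : (0:ℝ) < r := Real.sqrt_pos.2 (by positivity)
    have expand : u * (deriv η r * (u/r) * QS.Q u v + η r * pdU QS.Q u v
          + ((0 - deriv η r * (u / r)) * (A' * (u^2+v^2)) + (1 - η r) * (A' * (2*u))))
        = deriv η r * (u^2/r) * QS.Q u v + η r * (u * pdU QS.Q u v)
          + (-(deriv η r) * (u^2/r) * (A' * (u^2+v^2))) + (1 - η r) * (2 * A' * u^2) := by
      field_simp
      ring
    rw [expand]
    have hrhs : |deriv η r| * (u^2/r) * (|QS.Q u v| + A' * (u^2+v^2))
        = |deriv η r| * (u^2/r) * |QS.Q u v| + |deriv η r| * (u^2/r) * (A' * (u^2+v^2)) := by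
      ring
    linarith [key1, key2]

lemma Tv_bound (QS : QSetup p) {η : ℝ → ℝ} (hη : ContDiff ℝ 2 η) {A' : ℝ} (hA' : 0 ≤ A')
    (u v : ℝ) :
    v * pdV (Qhat QS η A') u v ≤
      |deriv η (Real.sqrt (u^2+v^2))| * (v^2 / Real.sqrt (u^2+v^2)) *
        (|QS.Q u v| + A' * (u^2+v^2))
      + η (Real.sqrt (u^2+v^2)) * (v * pdV QS.Q u v)
      + (1 - η (Real.sqrt (u^2+v^2))) * (2 * A' * v^2) := by
  by_cases hv0 : v = 0
  · subst hv0; simp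
  · set r := Real.sqrt (u^2+v^2) with hrdef
    have hg := gRadial' η hη A' u v hv0
    have hf : HasDerivAt (fun t : ℝ => η (Real.sqrt (u^2+t^2)) * QS.Q u t)
        (deriv η r * (v/r) * QS.Q u v + η r * pdV QS.Q u v) v := by
      by_cases hu : u ≤ 0
      · have hfun : (fun t : ℝ => η (Real.sqrt (u^2+t^2)) * QS.Q u t) = fun _ => (0:ℝ) := by
          funext t; rw [QS.ext_zero u t (Or.inl hu)]; ring
        have hQ0 : QS.Q u v = 0 := QS.ext_zero u v (Or.inl hu)
        have hp0 : pdV QS.Q u v = 0 := pdV_Q_zero_of_u_nonpos QS u v hu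
        rw [hfun, hQ0, hp0]
        simpa using hasDerivAt_const v (0:ℝ)
      · push_neg at hu
        rcases lt_trichotomy v 0 with hneg | hz | hpos
        · have hev : (fun t : ℝ => η (Real.sqrt (u^2+t^2)) * QS.Q u t) =ᶠ[nhds v]
              (fun _ => (0:ℝ)) := by
            filter_upwards [Iio_mem_nhds hneg] with t ht
            rw [QS.ext_zero u t (Or.inr ht.le)]; ring
          have hQ0 : QS.Q u v = 0 := QS.ext_zero u v (Or.inr hneg.le)
          have hp0 : pdV QS.Q u v = 0 := pdV_Q_zero_of_v_neg QS u v hneg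
          rw [hQ0, hp0]
          have h0 : HasDerivAt (fun _ : ℝ => (0:ℝ)) 0 v := hasDerivAt_const v 0
          simpa using h0.congr_of_eventuallyEq hev
        · exact absurd hz hv0
        · exact (etaRadial' η hη u v hv0).mul (hasDerivAt_Q_snd QS hu hpos)
    have hsum := hf.add hg
    have hQhat : HasDerivAt (fun t : ℝ => Qhat QS η A' u t)
        ((deriv η r * (v/r) * QS.Q u v + η r * pdV QS.Q u v)
          + ((0 - deriv η r * (v / r)) * (A' * (u^2+v^2))
            + (1 - η r) * (A' * (2*v)))) v := hsum
    have hpd : pdV (Qhat QS η A') u v =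
        (deriv η r * (v/r) * QS.Q u v + η r * pdV QS.Q u v)
          + ((0 - deriv η r * (v / r)) * (A' * (u^2+v^2))
            + (1 - η r) * (A' * (2*v))) := hQhat.deriv
    rw [hpd]
    have hr0 : (0:ℝ) ≤ r := Real.sqrt_nonneg _
    have hdivnn : (0:ℝ) ≤ v^2 / r := by positivity
    have key1 : deriv η r * (v^2/r) * QS.Q u v ≤ |deriv η r| * (v^2/r) * |QS.Q u v| := by
      have h1 : deriv η r * QS.Q u v ≤ |deriv η r| * |QS.Q u v| :=
        (le_abs_self _).trans (le_of_eq (abs_mul _ _))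
      calc deriv η r * (v^2/r) * QS.Q u v = (v^2/r) * (deriv η r * QS.Q u v) := by ring
        _ ≤ (v^2/r) * (|deriv η r| * |QS.Q u v|) := mul_le_mul_of_nonneg_left h1 hdivnn
        _ = |deriv η r| * (v^2/r) * |QS.Q u v| := by ring
    have key2 : -(deriv η r) * (v^2/r) * (A' * (u^2+v^2)) ≤
        |deriv η r| * (v^2/r) * (A' * (u^2+v^2)) := by
      have hAR : (0:ℝ) ≤ A' * (u^2+v^2) := by positivity
      exact mul_le_mul_of_nonneg_right
        (mul_le_mul_of_nonneg_right (neg_le_abs _) hdivnn) hAR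
    have hrpos : (0:ℝ) < r := Real.sqrt_pos.2 (by positivity)
    have expand : v * (deriv η r * (v/r) * QS.Q u v + η r * pdV QS.Q u v
          + ((0 - deriv η r * (v / r)) * (A' * (u^2+v^2)) + (1 - η r) * (A' * (2*v))))
        = deriv η r * (v^2/r) * QS.Q u v + η r * (v * pdV QS.Q u v)
          + (-(deriv η r) * (v^2/r) * (A' * (u^2+v^2))) + (1 - η r) * (2 * A' * v^2) := by
      field_simp
      ring
    rw [expand]
    have hrhs : |deriv η r| * (v^2/r) * (|QS.Q u v| + A' * (u^2+v^2))
        = |deriv η r| * (v^2/r) * |QS.Q u v| + |deriv η r| * (v^2/r) * (A' * (u^2+v^2)) := by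
      ring
    linarith [key1, key2]


set_option maxHeartbeats 2000000 in
lemma S_bound (QS : QSetup p) (hp2 : 2 < p) {a cη : ℝ} (ha : 0 < a) (hcη : 0 < cη)
    (E : EtaSetup a cη) {M : ℝ} (hM0 : 0 ≤ M)
    (hM : ∀ u v : ℝ, |QS.Q u v| ≤ M * (Real.sqrt (u^2+v^2)) ^ p)
    {C : ℝ} (hC : 0 < C)
    (hCb : ∀ u v : ℝ, 0 ≤ u → 0 ≤ v →
      |pdU QS.Q u v| + |pdV QS.Q u v| ≤ C * (u ^ (p-1) + v ^ (p-1)))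
    (u v : ℝ) :
    u * pdU (Qhat QS E.η (Aconst QS a)) u v + v * pdV (Qhat QS E.η (Aconst QS a)) u v ≤
      ((10*cη*M + 4*C + 2*M) * (5*a) ^ (p-2)) * (u^2+v^2) := by
  obtain ⟨hA0, hAle⟩ := Aconst_bounds QS hp2 hM0 hM ha
  by_cases hR0 : u^2 + v^2 = 0
  · have hu : u = 0 := by nlinarith [sq_nonneg u, sq_nonneg v]
    have hv : v = 0 := by nlinarith [sq_nonneg u, sq_nonneg v]
    subst hu; subst hv
    simp
  · have hRpos : 0 < u^2+v^2 := lt_of_le_of_ne (by positivity) (Ne.symm hR0)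
    set r := Real.sqrt (u^2+v^2) with hrdef
    have hrpos : 0 < r := Real.sqrt_pos.2 hRpos
    have hr2 : r^2 = u^2+v^2 := Real.sq_sqrt hRpos.le
    have T1 := Tu_bound QS E.smooth hA0 u v
    have T2 := Tv_bound QS E.smooth hA0 u v
    rw [← hrdef] at T1 T2
    clear_value r
    have he0 : 0 ≤ E.η r := (E.mem01 r).1
    have he1 : E.η r ≤ 1 := (E.mem01 r).2
    have h5a : (0:ℝ) < 5*a := by linarith
    have hp2' : (0:ℝ) ≤ p - 2 := by linarith
    have hpowpos : (0:ℝ) < (5*a)^(p-2) := Real.rpow_pos_of_pos h5a _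
    have hA'Rb : Aconst QS a * (u^2+v^2) ≤ M * ((5*a)^(p-2) * (u^2+v^2)) := by
      have := mul_le_mul_of_nonneg_right hAle hRpos.le
      linarith [this]
    by_cases hr5 : r ≤ 5*a
    · have hd : |deriv E.η r| ≤ cη / a := E.bd1 r
      have hrp : r^p ≤ (5*a)^(p-2) * (u^2+v^2) := by
        have h1 : r^p = r^(p-2) * (u^2+v^2) := by
          rw [← hr2, ← Real.rpow_two, ← Real.rpow_add hrpos]; norm_num
        rw [h1]
        exact mul_le_mul_of_nonneg_right (Real.rpow_le_rpow hrpos.le hr5 hp2') hRpos.le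
      have hQb : |QS.Q u v| ≤ M * ((5*a)^(p-2) * (u^2+v^2)) := by
        have hMuv := hM u v
        rw [← hrdef] at hMuv
        exact hMuv.trans (mul_le_mul_of_nonneg_left hrp hM0)
      have hdr : |deriv E.η r| * r ≤ 5 * cη := by
        calc |deriv E.η r| * r ≤ (cη/a) * (5*a) :=
              mul_le_mul hd hr5 hrpos.le (by positivity)
          _ = 5*cη := by field_simp
      have t1 : |deriv E.η r| * (u^2/r) * (|QS.Q u v| + Aconst QS a * (u^2+v^2))
              + |deriv E.η r| * (v^2/r) * (|QS.Q u v| + Aconst QS a * (u^2+v^2))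
              ≤ 10 * cη * (M * ((5*a)^(p-2) * (u^2+v^2))) := by
        have hsum' : |deriv E.η r| * (u^2/r) + |deriv E.η r| * (v^2/r)
            = |deriv E.η r| * r := by
          field_simp
          linear_combination (-|deriv E.η r|) * hr2
        have hQA : |QS.Q u v| + Aconst QS a * (u^2+v^2)
            ≤ 2*(M * ((5*a)^(p-2) * (u^2+v^2))) := by linarith
        have hQA0 : (0:ℝ) ≤ |QS.Q u v| + Aconst QS a * (u^2+v^2) := by positivity
        calc |deriv E.η r| * (u^2/r) * (|QS.Q u v| + Aconst QS a * (u^2+v^2))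
              + |deriv E.η r| * (v^2/r) * (|QS.Q u v| + Aconst QS a * (u^2+v^2))
            = (|deriv E.η r| * (u^2/r) + |deriv E.η r| * (v^2/r))
                * (|QS.Q u v| + Aconst QS a * (u^2+v^2)) := by ring
          _ = (|deriv E.η r| * r) * (|QS.Q u v| + Aconst QS a * (u^2+v^2)) := by rw [hsum']
          _ ≤ (5*cη) * (2*(M * ((5*a)^(p-2) * (u^2+v^2)))) := by
              apply mul_le_mul hdr hQA hQA0 (by positivity)
          _ = 10 * cη * (M * ((5*a)^(p-2) * (u^2+v^2))) := by ring
      have hinner : 0 ≤ u * pdU QS.Q u v + v * pdV QS.Q u v ∧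
          u * pdU QS.Q u v + v * pdV QS.Q u v ≤ 4*C*((5*a)^(p-2)*(u^2+v^2)) := by
        by_cases hiu : 0 < u ∧ 0 < v
        · obtain ⟨hu, hv⟩ := hiu
          obtain ⟨hq6u, hq6v⟩ := QS.q6 u v hu.le hv.le
          have hCbuv := hCb u v hu.le hv.le
          have hbU : pdU QS.Q u v ≤ C * (u^(p-1)+v^(p-1)) := by
            have h1 := le_abs_self (pdU QS.Q u v)
            have h2 := abs_nonneg (pdV QS.Q u v)
            linarith
          have hbV : pdV QS.Q u v ≤ C * (u^(p-1)+v^(p-1)) := by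
            have h1 := le_abs_self (pdV QS.Q u v)
            have h2 := abs_nonneg (pdU QS.Q u v)
            linarith
          have hur : u ≤ r := by
            rw [hrdef]
            calc u = Real.sqrt (u^2) := (Real.sqrt_sq hu.le).symm
              _ ≤ Real.sqrt (u^2+v^2) := Real.sqrt_le_sqrt (by nlinarith [sq_nonneg v])
          have hvr : v ≤ r := by
            rw [hrdef]
            calc v = Real.sqrt (v^2) := (Real.sqrt_sq hv.le).symm
              _ ≤ Real.sqrt (u^2+v^2) := Real.sqrt_le_sqrt (by nlinarith [sq_nonneg u])
          have hupow : u^(p-1) ≤ r^(p-1) := Real.rpow_le_rpow hu.le hur (by linarith)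
          have hvpow : v^(p-1) ≤ r^(p-1) := Real.rpow_le_rpow hv.le hvr (by linarith)
          have hrp1 : r * r^(p-1) = r^p := by
            have h := Real.rpow_add hrpos 1 (p-1)
            rw [Real.rpow_one] at h
            rw [show (1:ℝ)+(p-1) = p by ring] at h
            exact h.symm
          constructor
          · exact add_nonneg (mul_nonneg hu.le hq6u) (mul_nonneg hv.le hq6v)
          · have hCnn : (0:ℝ) ≤ C * (u^(p-1)+v^(p-1)) := by positivity
            calc u * pdU QS.Q u v + v * pdV QS.Q u v
                ≤ u * (C * (u^(p-1)+v^(p-1))) + v * (C * (u^(p-1)+v^(p-1))) :=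
                  add_le_add (mul_le_mul_of_nonneg_left hbU hu.le)
                    (mul_le_mul_of_nonneg_left hbV hv.le)
              _ = (u+v) * (C * (u^(p-1)+v^(p-1))) := by ring
              _ ≤ (2*r) * (C * (2*r^(p-1))) := by
                  apply mul_le_mul (by linarith) ?_ hCnn (by positivity)
                  exact mul_le_mul_of_nonneg_left (by linarith) hC.le
              _ = 4*C*(r * r^(p-1)) := by ring
              _ = 4*C*r^p := by rw [hrp1]
              _ ≤ 4*C*((5*a)^(p-2)*(u^2+v^2)) := by
                  exact mul_le_mul_of_nonneg_left hrp (by positivity)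
        · have hz : u * pdU QS.Q u v + v * pdV QS.Q u v = 0 := by
            push_neg at hiu
            by_cases hu : 0 < u
            · have hv : v ≤ 0 := hiu hu
              have h1 : pdU QS.Q u v = 0 := pdU_Q_zero_of_v_nonpos QS u v hv
              have h2 : v * pdV QS.Q u v = 0 := by
                rcases lt_or_eq_of_le hv with h | h
                · rw [pdV_Q_zero_of_v_neg QS u v h]; ring
                · rw [h]; ring
              rw [h1, h2]; ring
            · have hu' : u ≤ 0 := le_of_not_gt hu
              have h1 : pdV QS.Q u v = 0 := pdV_Q_zero_of_u_nonpos QS u v hu'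
              have h2 : u * pdU QS.Q u v = 0 := by
                rcases lt_or_eq_of_le hu' with h | h
                · rw [pdU_Q_zero_of_u_neg QS u v h]; ring
                · rw [h]; ring
              rw [h1, h2]; ring
          constructor
          · exact le_of_eq hz.symm
          · rw [hz]; positivity
      obtain ⟨hin0, hinb⟩ := hinner
      have t2 : E.η r * (u * pdU QS.Q u v) + E.η r * (v * pdV QS.Q u v)
          ≤ 4*C*((5*a)^(p-2)*(u^2+v^2)) := by
        have h1 : E.η r * (u * pdU QS.Q u v + v * pdV QS.Q u v)
            ≤ 1 * (u * pdU QS.Q u v + v * pdV QS.Q u v) :=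
          mul_le_mul_of_nonneg_right he1 hin0
        linarith [h1, hinb]
      have t3 : (1 - E.η r) * (2 * Aconst QS a * u^2) + (1 - E.η r) * (2 * Aconst QS a * v^2)
          ≤ 2*(M * ((5*a)^(p-2)*(u^2+v^2))) := by
        have hAR : (0:ℝ) ≤ 2 * (Aconst QS a * (u^2+v^2)) := by positivity
        have h1 : (1 - E.η r) * (2 * (Aconst QS a * (u^2+v^2)))
            ≤ 1 * (2 * (Aconst QS a * (u^2+v^2))) :=
          mul_le_mul_of_nonneg_right (by linarith) hAR
        linarith [h1, hA'Rb]
      have hfin : (10*cη*M + 4*C + 2*M) * (5*a)^(p-2) * (u^2+v^2)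
          = 10 * cη * (M * ((5*a)^(p-2) * (u^2+v^2))) + 4*C*((5*a)^(p-2)*(u^2+v^2))
            + 2*(M * ((5*a)^(p-2)*(u^2+v^2))) := by ring
      linarith [T1, T2, t1, t2, t3]
    · push_neg at hr5
      have he0' : E.η r = 0 := E.eq_zero r hr5.le
      have hd0 : deriv E.η r = 0 := by
        have hev : E.η =ᶠ[nhds r] (fun _ => (0:ℝ)) := by
          filter_upwards [Ioi_mem_nhds hr5] with t ht
          exact E.eq_zero t ht.le
        simpa using hev.deriv_eq
      rw [he0', hd0] at T1 T2
      simp only [abs_zero, zero_mul, zero_add, sub_zero, one_mul, mul_zero, add_zero] at T1 T2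
      have hcM : (0:ℝ) ≤ cη * M := mul_nonneg hcη.le hM0
      have hKnn : (0:ℝ) ≤ (10*(cη*M) + 4*C) * ((5*a)^(p-2) * (u^2+v^2)) := by
        have h0 : (0:ℝ) ≤ 10*(cη*M) + 4*C := by linarith
        have h1 : (0:ℝ) ≤ (5*a)^(p-2) * (u^2+v^2) := by positivity
        exact mul_nonneg h0 h1
      linarith [T1, T2, hA'Rb, hKnn]
  
end Aux

/-- for every `k > 0` there is `a₀ > 0` such that for all `a ∈ (0,a₀)`,
`x ∉ Λ` and `(u,v) ∈ ℝ²`, `u H_u + v H_v ≤ (1/k)(V(x)u² + W(x)v²)`. -/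
theorem stmt3 {N : ℕ} (s p : ℝ) (hs : 0 < s ∧ s < 1) (hN : 2 * s < (N : ℝ))
    (hp : 2 < p ∧ p < 2 * (N : ℝ) / ((N : ℝ) - 2 * s))
    (QS : QSetup p) (P : PotSetup N) (cη : ℝ) (hcη : 0 < cη) :
    ∀ k : ℝ, 0 < k → ∃ a₀ > 0, ∀ a : ℝ, 0 < a → a < a₀ → ∀ E : EtaSetup a cη,
      ∀ x ∉ P.Λ, ∀ u v : ℝ,
        u * HpenU QS E.η (Aconst QS a) P.Λ x u v +
        v * HpenV QS E.η (Aconst QS a) P.Λ x u v ≤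
          (1 / k) * (P.V x * u ^ 2 + P.W x * v ^ 2) := by
  intro k hk
  obtain ⟨M, hM0, hM⟩ := exists_M QS
  obtain ⟨C, hC, hCb⟩ := QS.q2
  have hp2 := hp.1
  set m := min (P.V P.x₀) (P.W P.x₀) with hmdef
  have hm0 : 0 < m := lt_min P.h3.2.2.1 P.h3.2.2.2
  set K₁ := (10*cη*M + 4*C + 2*M) * (5:ℝ)^(p-2) with hK
  have hK1pos : 0 < K₁ := by
    have h1 : (0:ℝ) < (5:ℝ)^(p-2) := Real.rpow_pos_of_pos (by norm_num) _
    have h2 : (0:ℝ) ≤ cη * M := mul_nonneg hcη.le hM0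
    have h3 : (0:ℝ) < 10*cη*M + 4*C + 2*M := by nlinarith
    exact mul_pos h3 h1
  have hbase : 0 < m / (k * K₁) := div_pos hm0 (mul_pos hk hK1pos)
  refine ⟨(m / (k * K₁)) ^ ((p-2)⁻¹), Real.rpow_pos_of_pos hbase _, ?_⟩
  intro a ha haa₀ E x hx u v
  have hb : a ^ (p-2) ≤ m / (k*K₁) := by
    have h1 : a ^ (p-2) ≤ ((m / (k * K₁)) ^ ((p-2)⁻¹)) ^ (p-2) :=
      Real.rpow_le_rpow ha.le haa₀.le (by linarith)
    rwa [Real.rpow_inv_rpow hbase.le (by intro h; rw [sub_eq_zero] at h; linarith)] at h1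
  have hfun1 : (fun t : ℝ => Hpen QS E.η (Aconst QS a) P.Λ x t v)
      = (fun t : ℝ => Qhat QS E.η (Aconst QS a) t v) := by
    funext t
    simp [Hpen, Set.indicator_of_notMem hx]
  have hfun2 : (fun t : ℝ => Hpen QS E.η (Aconst QS a) P.Λ x u t)
      = (fun t : ℝ => Qhat QS E.η (Aconst QS a) u t) := by
    funext t
    simp [Hpen, Set.indicator_of_notMem hx]
  have hU : HpenU QS E.η (Aconst QS a) P.Λ x u v = pdU (Qhat QS E.η (Aconst QS a)) u v := by
    simp only [HpenU, pdU]
    rw [hfun1]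
  have hV : HpenV QS E.η (Aconst QS a) P.Λ x u v = pdV (Qhat QS E.η (Aconst QS a)) u v := by
    simp only [HpenV, pdV]
    rw [hfun2]
  rw [hU, hV]
  have hS := S_bound QS hp2 ha hcη E hM0 hM hC hCb u v
  have h5 : (5*a)^(p-2) = (5:ℝ)^(p-2) * a^(p-2) := Real.mul_rpow (by norm_num) ha.le
  have hKa : ((10*cη*M + 4*C + 2*M) * (5*a)^(p-2)) * (u^2+v^2)
      = (K₁ * a^(p-2)) * (u^2+v^2) := by rw [h5, hK]; ring
  have hRnn : (0:ℝ) ≤ u^2+v^2 := by positivity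
  have step2 : K₁ * a^(p-2) ≤ m/k := by
    have h1 := mul_le_mul_of_nonneg_left hb hK1pos.le
    have heq : K₁ * (m/(k*K₁)) = m/k := by
      field_simp
    linarith
  have step3 : (m/k) * (u^2+v^2) ≤ (1/k)*(P.V x * u^2 + P.W x * v^2) := by
    have hVx : m ≤ P.V x := le_trans (min_le_left _ _) (P.h3.1 x)
    have hWx : m ≤ P.W x := le_trans (min_le_right _ _) (P.h3.2.1 x)
    have h1 : m*u^2 ≤ P.V x * u^2 := mul_le_mul_of_nonneg_right hVx (sq_nonneg u)
    have h2 : m*v^2 ≤ P.W x * v^2 := mul_le_mul_of_nonneg_right hWx (sq_nonneg v)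
    have hk' : (0:ℝ) ≤ 1/k := by positivity
    calc (m/k)*(u^2+v^2) = (1/k)*(m*u^2 + m*v^2) := by ring
      _ ≤ (1/k)*(P.V x*u^2 + P.W x*v^2) := by
          apply mul_le_mul_of_nonneg_left (by linarith) hk'
  calc u * pdU (Qhat QS E.η (Aconst QS a)) u v + v * pdV (Qhat QS E.η (Aconst QS a)) u v
      ≤ ((10*cη*M + 4*C + 2*M) * (5*a)^(p-2)) * (u^2+v^2) := hS
    _ = (K₁ * a^(p-2)) * (u^2+v^2) := hKa
    _ ≤ (m/k) * (u^2+v^2) := mul_le_mul_of_nonneg_right step2 hRnn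
    _ ≤ (1/k)*(P.V x * u^2 + P.W x * v^2) := step3
end

section
/- There exists C₁ > 0, independent of a, such that for every a > 0, every x ∈ ℝ^N ∖ Λ and every (u,v) ∈ ℝ²: |u H_u(x,u,v) + v H_v(x,u,v)| ≤ C₁ A (u² + v²). -/
open MeasureTheory Real Set Filter

section AuxStmt5

section Aux

private lemma le_sqrt_self' {u v : ℝ} (hu : 0 ≤ u) : u ≤ Real.sqrt (u^2+v^2) := by
  calc u = Real.sqrt (u^2) := (Real.sqrt_sq hu).symm
    _ ≤ Real.sqrt (u^2+v^2) := Real.sqrt_le_sqrt (by nlinarith [sq_nonneg v])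

private lemma abs_le_sqrt' (u v : ℝ) : |u| ≤ Real.sqrt (u^2+v^2) := by
  calc |u| = Real.sqrt (u^2) := (Real.sqrt_sq_eq_abs u).symm
    _ ≤ _ := Real.sqrt_le_sqrt (by nlinarith [sq_nonneg v])

private lemma term2_bound {p a C : ℝ} (hp2 : 2 < p) (ha : 0 < a) (hC0 : 0 ≤ C)
    {u v : ℝ} (hu : 0 < u) (hv : 0 ≤ v) (hr5 : Real.sqrt (u^2+v^2) ≤ 5*a) :
    |u| * (C * (u ^ (p-1) + v ^ (p-1))) ≤ 2*C*(5*a)^(p-2)*(u^2+v^2) := by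
  set r := Real.sqrt (u^2+v^2) with hrdef
  have hur : u ≤ r := le_sqrt_self' hu.le
  have hvr : v ≤ r := by
    calc v = Real.sqrt (v^2) := (Real.sqrt_sq hv).symm
      _ ≤ r := Real.sqrt_le_sqrt (by nlinarith [sq_nonneg u])
  have hrpos : 0 < r := lt_of_lt_of_le hu hur
  have h1 : u ^ (p-1) ≤ r ^ (p-1) := Real.rpow_le_rpow hu.le hur (by linarith)
  have h2 : v ^ (p-1) ≤ r ^ (p-1) := Real.rpow_le_rpow hv hvr (by linarith)
  have hr2 : r ^ 2 = u^2 + v^2 := Real.sq_sqrt (by positivity)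
  have hsplit : r ^ p = r ^ (p-2) * r ^ 2 := by
    have h := Real.rpow_add hrpos (p-2) (2:ℝ)
    rw [show p-2+(2:ℝ) = p by ring] at h
    rw [h, show (2:ℝ) = ((2:ℕ):ℝ) by norm_num, Real.rpow_natCast]
  have hmono : r ^ (p-2) ≤ (5*a) ^ (p-2) := Real.rpow_le_rpow hrpos.le hr5 (by linarith)
  calc |u| * (C * (u ^ (p-1) + v ^ (p-1))) = u * (C * (u^(p-1)+v^(p-1))) := by
        rw [abs_of_pos hu]
    _ ≤ r * (C * (r^(p-1) + r^(p-1))) := by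
        have hx : C * (u^(p-1)+v^(p-1)) ≤ C * (r^(p-1)+r^(p-1)) :=
          mul_le_mul_of_nonneg_left (add_le_add h1 h2) hC0
        have h0 : 0 ≤ C * (u^(p-1)+v^(p-1)) :=
          mul_nonneg hC0 (add_nonneg (Real.rpow_nonneg hu.le _) (Real.rpow_nonneg hv _))
        exact mul_le_mul hur hx h0 hrpos.le
    _ = 2*C*(r^(p-1)*r) := by ring
    _ = 2*C*(r^p) := by
        congr 1
        rw [← Real.rpow_add_one hrpos.ne' (p-1), show p-1+(1:ℝ) = p by ring]
    _ = 2*C*(r^(p-2)) * (u^2+v^2) := by rw [hsplit, hr2]; ring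
    _ ≤ 2*C*((5*a)^(p-2)) * (u^2+v^2) := by
        apply mul_le_mul_of_nonneg_right _ (by positivity)
        exact mul_le_mul_of_nonneg_left hmono (by linarith)
    _ = 2*C*(5*a)^(p-2)*(u^2+v^2) := by ring

end Aux

set_option maxHeartbeats 1000000 in
private lemma helperU {p a cη C A : ℝ} (hp2 : 2 < p) (ha : 0 < a) (hcη : 0 < cη)
    (hC0 : 0 ≤ C) (hA0 : 0 ≤ A) (f : ℝ → ℝ → ℝ)
    (hz : ∀ x y : ℝ, x ≤ 0 ∨ y ≤ 0 → f x y = 0)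
    (hdiff : ∀ x y : ℝ, 0 < x → 0 < y → DifferentiableAt ℝ (fun t => f t y) x)
    (hCb : ∀ x y : ℝ, 0 ≤ x → 0 ≤ y → |deriv (fun t => f t y) x| ≤ C * (x ^ (p-1) + y ^ (p-1)))
    (hQA : ∀ x y : ℝ, a ≤ Real.sqrt (x^2+y^2) → Real.sqrt (x^2+y^2) ≤ 5*a → f x y ≤ A * (x^2+y^2))
    (hf0 : ∀ x y : ℝ, 0 ≤ f x y)
    (E : EtaSetup a cη) (u v : ℝ) :
    |u * deriv (fun t => E.η (Real.sqrt (t^2+v^2)) * f t v +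
        (1 - E.η (Real.sqrt (t^2+v^2))) * (A * (t^2+v^2))) u| ≤
      ((10*cη+2)*A + 2*C*(5*a)^(p-2)) * (u^2+v^2) := by
  have hpow0 : (0:ℝ) ≤ (5*a)^(p-2) := Real.rpow_nonneg (by linarith) _
  have hK0 : 0 ≤ (10*cη+2)*A + 2*C*(5*a)^(p-2) := by
    have h1 : 0 ≤ (10*cη+2)*A := mul_nonneg (by linarith) hA0
    have h2 : 0 ≤ 2*C*(5*a)^(p-2) := mul_nonneg (by linarith) hpow0
    linarith
  have hRHS0 : 0 ≤ ((10*cη+2)*A + 2*C*(5*a)^(p-2)) * (u^2+v^2) :=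
    mul_nonneg hK0 (by positivity)
  rcases eq_or_ne u 0 with hu0 | hu0
  · simpa [hu0] using hRHS0
  have hsum_pos : 0 < u^2 + v^2 := by
    have h : 0 < u^2 := by rcases hu0.lt_or_gt with h | h <;> nlinarith
    nlinarith [sq_nonneg v]
  have hrpos : 0 < Real.sqrt (u^2+v^2) := Real.sqrt_pos.mpr hsum_pos
  by_cases hra : Real.sqrt (u^2+v^2) < a
  · -- zone r < a : penalized function equals f near u
    have hopen : IsOpen {t : ℝ | Real.sqrt (t^2+v^2) < a} :=
      isOpen_lt (Real.continuous_sqrt.comp (by fun_prop)) continuous_const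
    have hev : (fun t => E.η (Real.sqrt (t^2+v^2)) * f t v +
        (1 - E.η (Real.sqrt (t^2+v^2))) * (A * (t^2+v^2))) =ᶠ[nhds u] (fun t => f t v) := by
      filter_upwards [hopen.mem_nhds hra] with t ht
      rw [E.eq_one _ (le_of_lt ht)]; ring
    rw [hev.deriv_eq]
    rcases le_or_gt v 0 with hv | hv
    · have hfz : (fun t => f t v) = fun _ => (0:ℝ) := funext fun t => hz t v (Or.inr hv)
      rw [hfz, deriv_const]
      simpa using hRHS0
    rcases hu0.lt_or_gt with hu | hu
    · have hev2 : (fun t => f t v) =ᶠ[nhds u] (fun _ => (0:ℝ)) := by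
        filter_upwards [Iio_mem_nhds hu] with t ht
        exact hz t v (Or.inl ht.le)
      rw [hev2.deriv_eq, deriv_const]
      simpa using hRHS0
    · have hb : |u * deriv (fun t => f t v) u| ≤ |u| * (C * (u^(p-1)+v^(p-1))) := by
        rw [abs_mul]
        exact mul_le_mul_of_nonneg_left (hCb u v hu.le hv.le) (abs_nonneg u)
      have hb2 := term2_bound hp2 ha hC0 hu hv.le (le_trans hra.le (by linarith))
      have h1 : 0 ≤ (10*cη+2)*A*(u^2+v^2) :=
        mul_nonneg (mul_nonneg (by linarith) hA0) (by positivity)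
      nlinarith [hb, hb2]
  by_cases hr5 : 5*a < Real.sqrt (u^2+v^2)
  · -- zone r > 5a
    have hopen : IsOpen {t : ℝ | 5*a < Real.sqrt (t^2+v^2)} :=
      isOpen_lt continuous_const (Real.continuous_sqrt.comp (by fun_prop))
    have hev : (fun t => E.η (Real.sqrt (t^2+v^2)) * f t v +
        (1 - E.η (Real.sqrt (t^2+v^2))) * (A * (t^2+v^2))) =ᶠ[nhds u]
        (fun t => A * (t^2+v^2)) := by
      filter_upwards [hopen.mem_nhds hr5] with t ht
      rw [E.eq_zero _ (le_of_lt ht)]; ring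
    have hd : HasDerivAt (fun t : ℝ => A * (t^2+v^2)) (A*(2*u)) u := by
      have h := ((hasDerivAt_pow 2 u).add_const (v^2)).const_mul A
      simpa using h
    rw [hev.deriv_eq, hd.deriv]
    have heq : |u * (A*(2*u))| = 2*A*u^2 := by
      rw [show u * (A*(2*u)) = 2*A*u^2 by ring]
      exact abs_of_nonneg (mul_nonneg (mul_nonneg (by norm_num) hA0) (sq_nonneg u))
    rw [heq]
    have h1 : 0 ≤ cη*(A*(u^2+v^2)) := mul_nonneg hcη.le (mul_nonneg hA0 (by positivity))
    have h2 : 0 ≤ 2*C*(5*a)^(p-2)*(u^2+v^2) :=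
      mul_nonneg (mul_nonneg (by linarith) hpow0) (by positivity)
    have h3 : 0 ≤ A*v^2 := mul_nonneg hA0 (sq_nonneg v)
    nlinarith
  -- middle zone
  push_neg at hra hr5
  have hrne : (u^2+v^2) ≠ 0 := hsum_pos.ne'
  have hrne' : Real.sqrt (u^2+v^2) ≠ 0 := hrpos.ne'
  have hane : a ≠ 0 := ha.ne'
  have hsq : HasDerivAt (fun t : ℝ => t^2 + v^2) (2*u) u := by
    simpa using (hasDerivAt_pow 2 u).add_const (v^2)
  have hsqrt : HasDerivAt (fun t : ℝ => Real.sqrt (t^2+v^2))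
      (1/(2*Real.sqrt (u^2+v^2)) * (2*u)) u :=
    (Real.hasDerivAt_sqrt hrne).comp u hsq
  have hηd : HasDerivAt (fun t : ℝ => E.η (Real.sqrt (t^2+v^2)))
      (deriv E.η (Real.sqrt (u^2+v^2)) * (1/(2*Real.sqrt (u^2+v^2)) * (2*u))) u :=
    ((E.smooth.differentiable two_ne_zero) (Real.sqrt (u^2+v^2))).hasDerivAt.comp u hsqrt
  obtain ⟨D1, hD1def⟩ : ∃ D : ℝ,
      D = deriv E.η (Real.sqrt (u^2+v^2)) * (1/(2*Real.sqrt (u^2+v^2)) * (2*u)) := ⟨_, rfl⟩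
  rw [← hD1def] at hηd
  have hkey : |u| * |D1| ≤ 5*cη := by
    have hca : 0 ≤ cη/a := div_nonneg hcη.le ha.le
    have hD1e : D1 = deriv E.η (Real.sqrt (u^2+v^2)) * (u/Real.sqrt (u^2+v^2)) := by
      rw [hD1def]; field_simp
    have huabs : |u| ≤ Real.sqrt (u^2+v^2) := abs_le_sqrt' u v
    have h1 : |D1| = |deriv E.η (Real.sqrt (u^2+v^2))| * (|u| / Real.sqrt (u^2+v^2)) := by
      rw [hD1e, abs_mul, abs_div, abs_of_pos hrpos]
    have h2 : |u| * (|u| / Real.sqrt (u^2+v^2)) ≤ Real.sqrt (u^2+v^2) := by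
      have hm : |u| * |u| ≤ Real.sqrt (u^2+v^2) * Real.sqrt (u^2+v^2) :=
        mul_self_le_mul_self (abs_nonneg u) huabs
      calc |u| * (|u| / Real.sqrt (u^2+v^2)) = |u| * |u| / Real.sqrt (u^2+v^2) := by ring
        _ ≤ Real.sqrt (u^2+v^2) := by rw [div_le_iff₀ hrpos]; nlinarith [hm]
    calc |u| * |D1| = |deriv E.η (Real.sqrt (u^2+v^2))| * (|u| * (|u| / Real.sqrt (u^2+v^2))) := by
          rw [h1]; ring
      _ ≤ cη/a * Real.sqrt (u^2+v^2) :=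
          mul_le_mul (E.bd1 _) h2 (by positivity) hca
      _ ≤ cη/a * (5*a) := mul_le_mul_of_nonneg_left hr5 hca
      _ = 5*cη := by field_simp
  have hquad : HasDerivAt (fun t : ℝ => A*(t^2+v^2)) (A*(2*u)) u := hsq.const_mul A
  have hone : HasDerivAt (fun t : ℝ => 1 - E.η (Real.sqrt (t^2+v^2))) (-D1) u := hηd.const_sub 1
  have hquadpart : HasDerivAt (fun t : ℝ => (1 - E.η (Real.sqrt (t^2+v^2))) * (A*(t^2+v^2)))
      (-D1 * (A*(u^2+v^2)) + (1 - E.η (Real.sqrt (u^2+v^2))) * (A*(2*u))) u := hone.mul hquad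
  have hquadbound : |u * (-D1 * (A*(u^2+v^2)) + (1 - E.η (Real.sqrt (u^2+v^2))) * (A*(2*u)))|
      ≤ (5*cη + 2) * (A * (u^2+v^2)) := by
    have hAS : 0 ≤ A*(u^2+v^2) := mul_nonneg hA0 (by positivity)
    have t1 : |u * (-D1 * (A*(u^2+v^2)))| ≤ 5*cη * (A*(u^2+v^2)) := by
      rw [show u * (-D1 * (A*(u^2+v^2))) = -(u * D1 * (A*(u^2+v^2))) by ring, abs_neg,
        abs_mul, abs_mul, abs_of_nonneg hAS]
      exact mul_le_mul_of_nonneg_right hkey hAS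
    have h01 := E.mem01 (Real.sqrt (u^2+v^2))
    have t2 : |u * ((1 - E.η (Real.sqrt (u^2+v^2))) * (A*(2*u)))| ≤ 2 * (A*(u^2+v^2)) := by
      rw [show u * ((1 - E.η (Real.sqrt (u^2+v^2))) * (A*(2*u)))
          = (1 - E.η (Real.sqrt (u^2+v^2))) * (2*A*u^2) by ring, abs_mul,
        abs_of_nonneg (by linarith [h01.2] : (0:ℝ) ≤ 1 - E.η (Real.sqrt (u^2+v^2))),
        abs_of_nonneg (mul_nonneg (mul_nonneg (by norm_num) hA0) (sq_nonneg u))]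
      nlinarith [mul_nonneg (mul_nonneg hA0 (sq_nonneg u)) h01.1,
        mul_nonneg hA0 (sq_nonneg v), h01.1, h01.2, mul_nonneg hA0 (sq_nonneg u)]
    calc |u * (-D1 * (A*(u^2+v^2)) + (1 - E.η (Real.sqrt (u^2+v^2))) * (A*(2*u)))|
        ≤ |u * (-D1 * (A*(u^2+v^2)))| + |u * ((1 - E.η (Real.sqrt (u^2+v^2))) * (A*(2*u)))| := by
          rw [mul_add]; exact abs_add_le _ _
      _ ≤ 5*cη * (A*(u^2+v^2)) + 2 * (A*(u^2+v^2)) := add_le_add t1 t2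
      _ = (5*cη + 2) * (A * (u^2+v^2)) := by ring
  by_cases hcase : 0 < u ∧ 0 < v
  · obtain ⟨hu, hv⟩ := hcase
    have hf' : HasDerivAt (fun t => f t v) (deriv (fun t => f t v) u) u :=
      (hdiff u v hu hv).hasDerivAt
    have hdfull : HasDerivAt (fun t : ℝ => E.η (Real.sqrt (t^2+v^2)) * f t v +
        (1 - E.η (Real.sqrt (t^2+v^2))) * (A * (t^2+v^2)))
        (D1 * f u v + E.η (Real.sqrt (u^2+v^2)) * deriv (fun t => f t v) u +
          (-D1 * (A*(u^2+v^2)) + (1 - E.η (Real.sqrt (u^2+v^2))) * (A*(2*u)))) u :=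
      (hηd.mul hf').add hquadpart
    rw [hdfull.deriv]
    have hAS : 0 ≤ A*(u^2+v^2) := mul_nonneg hA0 (by positivity)
    have t1 : |u * (D1 * f u v)| ≤ 5*cη*(A*(u^2+v^2)) := by
      have hfb : |f u v| ≤ A*(u^2+v^2) := by
        rw [abs_of_nonneg (hf0 u v)]; exact hQA u v hra hr5
      rw [abs_mul, abs_mul, ← mul_assoc]
      exact mul_le_mul hkey hfb (abs_nonneg _) (by linarith)
    have h01 := E.mem01 (Real.sqrt (u^2+v^2))
    have t2 : |u * (E.η (Real.sqrt (u^2+v^2)) * deriv (fun t => f t v) u)|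
        ≤ 2*C*(5*a)^(p-2)*(u^2+v^2) := by
      have step : |u * (E.η (Real.sqrt (u^2+v^2)) * deriv (fun t => f t v) u)|
          ≤ |u| * (C * (u^(p-1)+v^(p-1))) := by
        rw [show u * (E.η (Real.sqrt (u^2+v^2)) * deriv (fun t => f t v) u)
            = E.η (Real.sqrt (u^2+v^2)) * (u * deriv (fun t => f t v) u) by ring, abs_mul,
          abs_of_nonneg h01.1]
        calc E.η (Real.sqrt (u^2+v^2)) * |u * deriv (fun t => f t v) u|
            ≤ 1 * |u * deriv (fun t => f t v) u| :=
              mul_le_mul_of_nonneg_right h01.2 (abs_nonneg _)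
          _ = |u| * |deriv (fun t => f t v) u| := by rw [one_mul, abs_mul]
          _ ≤ |u| * (C * (u^(p-1)+v^(p-1))) :=
              mul_le_mul_of_nonneg_left (hCb u v hu.le hv.le) (abs_nonneg u)
      exact step.trans (term2_bound hp2 ha hC0 hu hv.le hr5)
    calc |u * (D1 * f u v + E.η (Real.sqrt (u^2+v^2)) * deriv (fun t => f t v) u +
          (-D1 * (A*(u^2+v^2)) + (1 - E.η (Real.sqrt (u^2+v^2))) * (A*(2*u))))|
        ≤ |u * (D1 * f u v)| + |u * (E.η (Real.sqrt (u^2+v^2)) * deriv (fun t => f t v) u)|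
          + |u * (-D1 * (A*(u^2+v^2)) + (1 - E.η (Real.sqrt (u^2+v^2))) * (A*(2*u)))| := by
          rw [show u * (D1 * f u v + E.η (Real.sqrt (u^2+v^2)) * deriv (fun t => f t v) u +
            (-D1 * (A*(u^2+v^2)) + (1 - E.η (Real.sqrt (u^2+v^2))) * (A*(2*u))))
            = u * (D1 * f u v) + u * (E.η (Real.sqrt (u^2+v^2)) * deriv (fun t => f t v) u)
            + u * (-D1 * (A*(u^2+v^2)) + (1 - E.η (Real.sqrt (u^2+v^2))) * (A*(2*u))) by ring]
          exact (abs_add_le _ _).trans (add_le_add (abs_add_le _ _) le_rfl)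
      _ ≤ 5*cη*(A*(u^2+v^2)) + 2*C*(5*a)^(p-2)*(u^2+v^2) + (5*cη+2)*(A*(u^2+v^2)) :=
          add_le_add (add_le_add t1 t2) hquadbound
      _ = ((10*cη+2)*A + 2*C*(5*a)^(p-2)) * (u^2+v^2) := by ring
  · have hev : (fun t => E.η (Real.sqrt (t^2+v^2)) * f t v +
        (1 - E.η (Real.sqrt (t^2+v^2))) * (A * (t^2+v^2))) =ᶠ[nhds u]
        (fun t => (1 - E.η (Real.sqrt (t^2+v^2))) * (A * (t^2+v^2))) := by
      rcases le_or_gt v 0 with hv | hv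
      · refine Filter.Eventually.of_forall fun t => ?_
        simp only [hz t v (Or.inr hv)]; ring
      · have hu : u < 0 := by
          rcases hu0.lt_or_gt with h | h
          · exact h
          · exact absurd ⟨h, hv⟩ hcase
        filter_upwards [Iio_mem_nhds hu] with t ht
        rw [hz t v (Or.inl ht.le)]; ring
    rw [hev.deriv_eq, hquadpart.deriv]
    have h2 : 0 ≤ 2*C*(5*a)^(p-2)*(u^2+v^2) :=
      mul_nonneg (mul_nonneg (by linarith) hpow0) (by positivity)
    have h3 : 0 ≤ cη * (A*(u^2+v^2)) := mul_nonneg hcη.le (mul_nonneg hA0 (by positivity))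
    nlinarith [hquadbound]

private lemma contQ {p : ℝ} (QS : QSetup p) : Continuous (fun z : ℝ × ℝ => QS.Q z.1 z.2) := by
  rw [continuous_iff_continuousAt]
  intro z
  rcases lt_or_ge z.1 0 with h1 | h1
  · have hev : (fun w : ℝ × ℝ => QS.Q w.1 w.2) =ᶠ[nhds z] (fun _ => (0:ℝ)) := by
      filter_upwards [(isOpen_lt continuous_fst continuous_const).mem_nhds h1] with w hw
      exact QS.ext_zero w.1 w.2 (Or.inl (le_of_lt hw))
    exact continuousAt_const.congr hev.symm
  rcases lt_or_ge z.2 0 with h2 | h2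
  · have hev : (fun w : ℝ × ℝ => QS.Q w.1 w.2) =ᶠ[nhds z] (fun _ => (0:ℝ)) := by
      filter_upwards [(isOpen_lt continuous_snd continuous_const).mem_nhds h2] with w hw
      exact QS.ext_zero w.1 w.2 (Or.inr (le_of_lt hw))
    exact continuousAt_const.congr hev.symm
  by_cases hint : 0 < z.1 ∧ 0 < z.2
  · exact (QS.smooth.continuousOn).continuousAt
      (mem_of_superset ((isOpen_Ioi.prod isOpen_Ioi).mem_nhds ⟨hint.1, hint.2⟩)
        (Set.prod_mono Ioi_subset_Ici_self Ioi_subset_Ici_self))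
  · have hFz : QS.Q z.1 z.2 = 0 :=
      QS.ext_zero _ _ ((not_and_or.mp hint).imp not_lt.mp not_lt.mp)
    have hcw1 : ContinuousWithinAt (fun w : ℝ × ℝ => QS.Q w.1 w.2) (Ici 0 ×ˢ Ici 0) z :=
      (QS.smooth.continuousOn) z ⟨h1, h2⟩
    have hcw2 : ContinuousWithinAt (fun w : ℝ × ℝ => QS.Q w.1 w.2) ((Ici 0 ×ˢ Ici 0)ᶜ) z := by
      refine continuousWithinAt_const.congr (fun w hw => ?_) hFz
      have hw' : ¬ (0 ≤ w.1 ∧ 0 ≤ w.2) := by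
        intro hc
        exact hw (Set.mem_prod.mpr ⟨hc.1, hc.2⟩)
      exact QS.ext_zero w.1 w.2
        ((not_and_or.mp hw').imp (fun h => (not_le.mp h).le) (fun h => (not_le.mp h).le))
    have hu := hcw1.union hcw2
    rw [Set.union_compl_self] at hu
    exact continuousWithinAt_univ _ _ |>.mp hu

end AuxStmt5

set_option maxHeartbeats 1000000

/-- there is `C₁ > 0` independent of `a` with
`|u H_u(x,u,v) + v H_v(x,u,v)| ≤ C₁ A (u² + v²)` for `x ∉ Λ` and all `(u,v)`. -/
theorem stmt5 {N : ℕ} (s p : ℝ) (hs : 0 < s ∧ s < 1) (hN : 2 * s < (N : ℝ))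
    (hp : 2 < p ∧ p < 2 * (N : ℝ) / ((N : ℝ) - 2 * s))
    (QS : QSetup p) (Λ : Set (Euc N)) (hΛo : IsOpen Λ) (hΛb : Bornology.IsBounded Λ)
    (cη : ℝ) (hcη : 0 < cη) :
    ∃ C₁ : ℝ, 0 < C₁ ∧ ∀ a : ℝ, 0 < a → ∀ E : EtaSetup a cη, ∀ x ∉ Λ, ∀ u v : ℝ,
      |u * HpenU QS E.η (Aconst QS a) Λ x u v +
       v * HpenV QS E.η (Aconst QS a) Λ x u v| ≤
        C₁ * Aconst QS a * (u ^ 2 + v ^ 2) := by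
  obtain ⟨C, hCpos, hq2⟩ := QS.q2
  have hp2 : 2 < p := hp.1
  have hc0pos : 0 < QS.Q 1 1 := QS.q5 1 1 one_pos one_pos
  have hq0pos : 0 < QS.Q 1 1 * (2:ℝ)^(p-3) :=
    mul_pos hc0pos (Real.rpow_pos_of_pos two_pos _)
  have h5pow : (0:ℝ) ≤ (5:ℝ)^(p-2) := Real.rpow_nonneg (by norm_num) _
  refine ⟨2*(10*cη+2) + 4*C*(5:ℝ)^(p-2)/(QS.Q 1 1 * (2:ℝ)^(p-3)), ?_, ?_⟩
  · have h2 : 0 ≤ 4*C*(5:ℝ)^(p-2)/(QS.Q 1 1 * (2:ℝ)^(p-3)) :=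
      div_nonneg (mul_nonneg (by linarith) h5pow) hq0pos.le
    linarith
  intro a ha E x hx u v
  have hcont : Continuous (fun z : ℝ × ℝ => QS.Q z.1 z.2) := contQ QS
  have hgc : Continuous (fun z : ℝ × ℝ => Real.sqrt (z.1^2+z.2^2)) :=
    Real.continuous_sqrt.comp (by fun_prop)
  have hSclosed : IsClosed {z : ℝ × ℝ | a ≤ Real.sqrt (z.1^2+z.2^2) ∧
      Real.sqrt (z.1^2+z.2^2) ≤ 5*a} :=
    (isClosed_le continuous_const hgc).inter (isClosed_le hgc continuous_const)
  have hSsub : {z : ℝ × ℝ | a ≤ Real.sqrt (z.1^2+z.2^2) ∧ Real.sqrt (z.1^2+z.2^2) ≤ 5*a}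
      ⊆ Metric.closedBall 0 (5*a) := by
    intro z hz
    rw [Metric.mem_closedBall, dist_zero_right, Prod.norm_def]
    apply max_le
    · rw [Real.norm_eq_abs]; exact (abs_le_sqrt' z.1 z.2).trans hz.2
    · rw [Real.norm_eq_abs]
      calc |z.2| ≤ Real.sqrt (z.2^2 + z.1^2) := abs_le_sqrt' z.2 z.1
        _ = Real.sqrt (z.1^2+z.2^2) := by rw [add_comm]
        _ ≤ 5*a := hz.2
  have hScpt : IsCompact {z : ℝ × ℝ | a ≤ Real.sqrt (z.1^2+z.2^2) ∧
      Real.sqrt (z.1^2+z.2^2) ≤ 5*a} :=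
    (isCompact_closedBall (0 : ℝ × ℝ) (5*a)).of_isClosed_subset hSclosed hSsub
  have hgcont : ContinuousOn (fun z : ℝ × ℝ => QS.Q z.1 z.2 / (z.1^2+z.2^2))
      {z : ℝ × ℝ | a ≤ Real.sqrt (z.1^2+z.2^2) ∧ Real.sqrt (z.1^2+z.2^2) ≤ 5*a} := by
    apply ContinuousOn.div hcont.continuousOn (by fun_prop)
    intro z hz
    have h0 : 0 < Real.sqrt (z.1^2+z.2^2) := lt_of_lt_of_le ha hz.1
    exact (Real.sqrt_pos.mp h0).ne'
  have hbdd : BddAbove ((fun z : ℝ × ℝ => QS.Q z.1 z.2 / (z.1 ^ 2 + z.2 ^ 2)) ''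
      {z : ℝ × ℝ | a ≤ Real.sqrt (z.1 ^ 2 + z.2 ^ 2) ∧ Real.sqrt (z.1 ^ 2 + z.2 ^ 2) ≤ 5 * a}) :=
    hScpt.bddAbove_image hgcont
  have hsup : ∀ w : ℝ × ℝ, a ≤ Real.sqrt (w.1^2+w.2^2) → Real.sqrt (w.1^2+w.2^2) ≤ 5*a →
      QS.Q w.1 w.2 / (w.1^2+w.2^2) ≤ Aconst QS a := by
    intro w h1 h2
    exact le_csSup hbdd ⟨w, ⟨h1, h2⟩, rfl⟩
  have hA0 : 0 ≤ Aconst QS a := by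
    have hm1 : a ≤ Real.sqrt (a^2 + (0:ℝ)^2) := by
      rw [show a^2 + (0:ℝ)^2 = a^2 by ring, Real.sqrt_sq ha.le]
    have hm2 : Real.sqrt (a^2 + (0:ℝ)^2) ≤ 5*a := by
      rw [show a^2 + (0:ℝ)^2 = a^2 by ring, Real.sqrt_sq ha.le]; linarith
    have h := hsup ((a, 0) : ℝ × ℝ) hm1 hm2
    simp only [QS.ext_zero a 0 (Or.inr le_rfl), zero_div] at h
    exact h
  have hQA : ∀ x' y' : ℝ, a ≤ Real.sqrt (x'^2+y'^2) → Real.sqrt (x'^2+y'^2) ≤ 5*a →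
      QS.Q x' y' ≤ Aconst QS a * (x'^2+y'^2) := by
    intro x' y' h1 h2
    have hpos : 0 < x'^2+y'^2 := Real.sqrt_pos.mp (lt_of_lt_of_le ha h1)
    have h := hsup (x', y') h1 h2
    calc QS.Q x' y' = QS.Q x' y' / (x'^2+y'^2) * (x'^2+y'^2) := by field_simp
      _ ≤ Aconst QS a * (x'^2+y'^2) := mul_le_mul_of_nonneg_right h hpos.le
  have hAlow : QS.Q 1 1 * (2:ℝ)^(p-3) * a^(p-2) ≤ Aconst QS a := by
    have hm1 : a ≤ Real.sqrt ((2*a)^2 + (2*a)^2) := by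
      calc a = Real.sqrt (a^2) := (Real.sqrt_sq ha.le).symm
        _ ≤ _ := Real.sqrt_le_sqrt (by nlinarith)
    have hm2 : Real.sqrt ((2*a)^2 + (2*a)^2) ≤ 5*a := by
      calc Real.sqrt ((2*a)^2 + (2*a)^2) ≤ Real.sqrt ((5*a)^2) :=
            Real.sqrt_le_sqrt (by nlinarith)
        _ = 5*a := Real.sqrt_sq (by linarith)
    have h := hsup ((2*a, 2*a) : ℝ × ℝ) hm1 hm2
    have hQ2a : QS.Q (2*a) (2*a) = (2*a)^p * QS.Q 1 1 := by
      have h' := QS.q1 (2*a) (by linarith) 1 1 zero_le_one zero_le_one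
      simpa using h'
    have h8 : ((2*a)^2 + (2*a)^2 : ℝ) ≠ 0 := by positivity
    have key : (2*a)^p * QS.Q 1 1 / ((2*a)^2 + (2*a)^2) = QS.Q 1 1 * (2:ℝ)^(p-3) * a^(p-2) := by
      have e1 : ((2:ℝ)*a)^p = 2^p * a^p := Real.mul_rpow (by norm_num) ha.le
      have e2 : (2:ℝ)^p = 2^(p-3) * 2^(3:ℝ) := by
        rw [← Real.rpow_add two_pos]; norm_num
      have e3 : (a:ℝ)^p = a^(p-2) * a^(2:ℝ) := by
        rw [← Real.rpow_add ha]; norm_num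
      have e4 : (2:ℝ)^(3:ℝ) = 8 := by
        rw [show (3:ℝ) = ((3:ℕ):ℝ) by norm_num, Real.rpow_natCast]; norm_num
      have e5 : (a:ℝ)^(2:ℝ) = a^2 := by
        rw [show (2:ℝ) = ((2:ℕ):ℝ) by norm_num, Real.rpow_natCast]
      rw [e1, e2, e3, e4, e5]
      field_simp
      ring
    simp only [hQ2a] at h
    rw [key] at h
    exact h
  have hxind : Λ.indicator (fun _ => (1:ℝ)) x = 0 := Set.indicator_of_notMem hx _
  have hHU : HpenU QS E.η (Aconst QS a) Λ x u v
      = deriv (fun t => E.η (Real.sqrt (t^2+v^2)) * QS.Q t v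
        + (1 - E.η (Real.sqrt (t^2+v^2))) * (Aconst QS a * (t^2+v^2))) u := by
    have heq : (fun t => Hpen QS E.η (Aconst QS a) Λ x t v)
        = fun t => E.η (Real.sqrt (t^2+v^2)) * QS.Q t v
          + (1 - E.η (Real.sqrt (t^2+v^2))) * (Aconst QS a * (t^2+v^2)) := by
      funext t
      simp only [Hpen, Qhat, hxind]
      ring
    unfold HpenU pdU
    rw [heq]
  have hHV : HpenV QS E.η (Aconst QS a) Λ x u v
      = deriv (fun t => E.η (Real.sqrt (t^2+u^2)) * QS.Q u t
        + (1 - E.η (Real.sqrt (t^2+u^2))) * (Aconst QS a * (t^2+u^2))) v := by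
    have heq : (fun t => Hpen QS E.η (Aconst QS a) Λ x u t)
        = fun t => E.η (Real.sqrt (t^2+u^2)) * QS.Q u t
          + (1 - E.η (Real.sqrt (t^2+u^2))) * (Aconst QS a * (t^2+u^2)) := by
      funext t
      simp only [Hpen, Qhat, hxind]
      rw [add_comm (u^2) (t^2)]
      ring
    unfold HpenV pdV
    rw [heq]
  have hdiffQ : ∀ x' y' : ℝ, 0 < x' → 0 < y' →
      DifferentiableAt ℝ (fun z : ℝ × ℝ => QS.Q z.1 z.2) (x', y') := by
    intro x' y' hx' hy'
    have hnb : (Ici (0:ℝ) ×ˢ Ici (0:ℝ)) ∈ nhds ((x', y') : ℝ × ℝ) :=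
      mem_of_superset ((isOpen_Ioi.prod isOpen_Ioi).mem_nhds ⟨hx', hy'⟩)
        (Set.prod_mono Ioi_subset_Ici_self Ioi_subset_Ici_self)
    exact (QS.smooth.contDiffAt hnb).differentiableAt two_ne_zero
  have hdiffU : ∀ x' y' : ℝ, 0 < x' → 0 < y' → DifferentiableAt ℝ (fun t => QS.Q t y') x' := by
    intro x' y' hx' hy'
    exact (hdiffQ x' y' hx' hy').comp x' ((differentiableAt_id : DifferentiableAt ℝ (id : ℝ → ℝ) x').prodMk (differentiableAt_const y'))
  have hdiffV : ∀ x' y' : ℝ, 0 < x' → 0 < y' → DifferentiableAt ℝ (fun t => QS.Q y' t) x' := by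
    intro x' y' hx' hy'
    exact (hdiffQ y' x' hy' hx').comp x' ((differentiableAt_const y' : DifferentiableAt ℝ (fun _ : ℝ => y') x').prodMk differentiableAt_id)
  have hCbU : ∀ x' y' : ℝ, 0 ≤ x' → 0 ≤ y' →
      |deriv (fun t => QS.Q t y') x'| ≤ C * (x'^(p-1) + y'^(p-1)) := by
    intro x' y' hx' hy'
    have h := hq2 x' y' hx' hy'
    have h2 : |pdU QS.Q x' y'| ≤ C * (x'^(p-1) + y'^(p-1)) :=
      le_trans (le_add_of_nonneg_right (abs_nonneg _)) h
    exact h2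
  have hCbV : ∀ x' y' : ℝ, 0 ≤ x' → 0 ≤ y' →
      |deriv (fun t => QS.Q y' t) x'| ≤ C * (x'^(p-1) + y'^(p-1)) := by
    intro x' y' hx' hy'
    have h := hq2 y' x' hy' hx'
    have h2 : |pdV QS.Q y' x'| ≤ C * (y'^(p-1) + x'^(p-1)) :=
      le_trans (le_add_of_nonneg_left (abs_nonneg _)) h
    calc |deriv (fun t => QS.Q y' t) x'| = |pdV QS.Q y' x'| := rfl
      _ ≤ C * (y'^(p-1) + x'^(p-1)) := h2
      _ = C * (x'^(p-1) + y'^(p-1)) := by ring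
  have hf0 : ∀ x' y' : ℝ, 0 ≤ QS.Q x' y' := by
    intro x' y'
    rcases le_or_gt x' 0 with h | h
    · rw [QS.ext_zero x' y' (Or.inl h)]
    rcases le_or_gt y' 0 with h' | h'
    · rw [QS.ext_zero x' y' (Or.inr h')]
    exact (QS.q5 x' y' h h').le
  have hQAV : ∀ x' y' : ℝ, a ≤ Real.sqrt (x'^2+y'^2) → Real.sqrt (x'^2+y'^2) ≤ 5*a →
      QS.Q y' x' ≤ Aconst QS a * (x'^2+y'^2) := by
    intro x' y' h1 h2
    have h1' : a ≤ Real.sqrt (y'^2+x'^2) := by rwa [add_comm]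
    have h2' : Real.sqrt (y'^2+x'^2) ≤ 5*a := by rwa [add_comm]
    have h := hQA y' x' h1' h2'
    linarith [h]
  have hU := helperU hp2 ha hcη hCpos.le hA0 QS.Q QS.ext_zero hdiffU hCbU hQA hf0 E u v
  have hV : |v * deriv (fun t => E.η (Real.sqrt (t^2+u^2)) * QS.Q u t
      + (1 - E.η (Real.sqrt (t^2+u^2))) * (Aconst QS a * (t^2+u^2))) v|
      ≤ ((10*cη+2)*(Aconst QS a) + 2*C*(5*a)^(p-2)) * (v^2+u^2) :=
    helperU hp2 ha hcη hCpos.le hA0 (fun x' y' => QS.Q y' x')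
      (fun x' y' h => QS.ext_zero y' x' h.symm) hdiffV hCbV hQAV
      (fun x' y' => hf0 y' x') E v u
  rw [hHU, hHV]
  have habs := abs_add_le (u * deriv (fun t => E.η (Real.sqrt (t^2+v^2)) * QS.Q t v
        + (1 - E.η (Real.sqrt (t^2+v^2))) * (Aconst QS a * (t^2+v^2))) u)
      (v * deriv (fun t => E.η (Real.sqrt (t^2+u^2)) * QS.Q u t
        + (1 - E.η (Real.sqrt (t^2+u^2))) * (Aconst QS a * (t^2+u^2))) v)
  have hpowsplit : ((5*a):ℝ)^(p-2) = 5^(p-2) * a^(p-2) := Real.mul_rpow (by norm_num) ha.le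
  have hstep : 4*C*(5*a)^(p-2) ≤ 4*C*(5:ℝ)^(p-2)/(QS.Q 1 1 * (2:ℝ)^(p-3)) * Aconst QS a := by
    rw [hpowsplit, div_mul_eq_mul_div, le_div_iff₀ hq0pos]
    calc 4*C*(5^(p-2) * a^(p-2)) * (QS.Q 1 1 * (2:ℝ)^(p-3))
        = (4*C*5^(p-2)) * (QS.Q 1 1 * (2:ℝ)^(p-3) * a^(p-2)) := by ring
      _ ≤ (4*C*5^(p-2)) * Aconst QS a :=
          mul_le_mul_of_nonneg_left hAlow (mul_nonneg (by linarith) h5pow)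
      _ = 4*C*(5:ℝ)^(p-2) * Aconst QS a := by ring
  refine le_trans habs (le_trans (add_le_add hU hV) ?_)
  have hmul := mul_le_mul_of_nonneg_right hstep (show (0:ℝ) ≤ u^2+v^2 by positivity)
  nlinarith [hmul]
end
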